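/- arXiv:0903.0070 — 4 statements merged into one kernel-verified Lean document; each statement's English description precedes it below -/
import Mathlib

section
/- Under hypotheses (H1) and (H3), the function z = (x₁,x₂) ↦ x₂ exp(a(1,0)·z) − E_z(S₂(τ) exp(a(1,0)·S(τ)); τ < ∞) is well defined (the expectation converges absolutely) and nonnegative at every z ∈ ℕ*×ℕ*. -/
open scoped ENNReal Classical
open Filter

namespace KRWQ

/-- `n`-step transition probabilities of the homogeneous random walk with step
distribution `μ` on an abelian group `G`: `nstep μ n z z' = P_z(S(n) = z')`. -/
noncomputable def nstep {G : Type*} [AddCommGroup G] (μ : G → ℝ≥0∞) : ℕ → G → G → ℝ≥0∞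
  | 0, z, z' => if z' = z then 1 else 0
  | n + 1, z, z' => ∑' w : G, nstep μ n z w * μ (z' - w)

/-- `n`-step transition probabilities of the random walk killed outside the set `A`:
for `z ∈ A`, `nstepK μ A n z z' = P_z(S(n) = z', S(k) ∈ A for all k ≤ n)`. -/
noncomputable def nstepK {G : Type*} [AddCommGroup G] (μ : G → ℝ≥0∞) (A : Set G) :
    ℕ → G → G → ℝ≥0∞
  | 0, z, z' => if z' = z then 1 else 0
  | n + 1, z, z' => A.indicator (fun u => ∑' w : G, nstepK μ A n z w * μ (u - w)) z'

/-- Green function of the homogeneous random walk. -/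
noncomputable def green {G : Type*} [AddCommGroup G] (μ : G → ℝ≥0∞) (z z' : G) : ℝ≥0∞ :=
  ∑' n : ℕ, nstep μ n z z'

/-- Green function of the random walk killed outside `A`. -/
noncomputable def greenK {G : Type*} [AddCommGroup G] (μ : G → ℝ≥0∞) (A : Set G)
    (z z' : G) : ℝ≥0∞ :=
  ∑' n : ℕ, nstepK μ A n z z'

/-- Distribution of the exit position: for `z ∈ A`, `exitK μ A z w` is the probability
that the walk started at `z` first exits `A` (in finite time) at the point `w`,
i.e. `P_z(τ < ∞, S(τ) = w)` where `τ = inf{n ≥ 0 : S(n) ∉ A}`. -/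
noncomputable def exitK {G : Type*} [AddCommGroup G] (μ : G → ℝ≥0∞) (A : Set G)
    (z w : G) : ℝ≥0∞ :=
  Aᶜ.indicator (fun u => ∑' n : ℕ, ∑' v : G, nstepK μ A n z v * μ (u - v)) w

/-- `Eexit μ A z f = E_z(f(S(τ)); τ < ∞)` for a nonnegative `f`,
where `τ` is the first exit time from `A` and `z ∈ A`. -/
noncomputable def Eexit {G : Type*} [AddCommGroup G] (μ : G → ℝ≥0∞) (A : Set G) (z : G)
    (f : G → ℝ≥0∞) : ℝ≥0∞ :=
  ∑' w : G, exitK μ A z w * f w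

/-- `EexitR μ A z f = E_z(f(S(τ)); τ < ∞)` for a signed `f` (real-valued version). -/
noncomputable def EexitR {G : Type*} [AddCommGroup G] (μ : G → ℝ≥0∞) (A : Set G) (z : G)
    (f : G → ℝ) : ℝ :=
  ∑' w : G, (exitK μ A z w).toReal * f w

/-- Euclidean scalar product on `ℝ²`. -/
def dot (a b : ℝ × ℝ) : ℝ := a.1 * b.1 + a.2 * b.2

/-- Embedding of the lattice `ℤ²` into `ℝ²`. -/
def toR (z : ℤ × ℤ) : ℝ × ℝ := ((z.1 : ℝ), (z.2 : ℝ))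

/-- Euclidean norm on `ℝ²`. -/
noncomputable def norE (p : ℝ × ℝ) : ℝ := Real.sqrt (p.1 ^ 2 + p.2 ^ 2)

/-- Euclidean norm of a lattice point. -/
noncomputable def normZ (z : ℤ × ℤ) : ℝ := norE (toR z)

/-- The open quadrant `ℕ* × ℕ*`. -/
def quadrant : Set (ℤ × ℤ) := {z | 0 < z.1 ∧ 0 < z.2}

/-- The half plane `ℤ × ℕ*` (state space of the local process `Z¹₊`). -/
def upperHalf : Set (ℤ × ℤ) := {z | 0 < z.2}

/-- The half plane `ℕ* × ℤ` (state space of the local process `Z²₊`). -/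
def rightHalf : Set (ℤ × ℤ) := {z | 0 < z.1}

/-- The jump generating function `φ(a) = ∑_z μ(z) exp(a·z)`. -/
noncomputable def jumpGF (μ : ℤ × ℤ → ℝ≥0∞) (a : ℝ × ℝ) : ℝ≥0∞ :=
  ∑' z : ℤ × ℤ, μ z * ENNReal.ofReal (Real.exp (dot a (toR z)))

/-- Hypothesis (H1): the homogeneous random walk `S` with step distribution `μ`
is irreducible, and its mean `m = ∑_z z μ(z)` exists and is nonzero. -/
def H1 (μ : ℤ × ℤ → ℝ≥0∞) : Prop :=
  (∀ z z' : ℤ × ℤ, ∃ n : ℕ, 0 < nstep μ n z z') ∧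
    Summable (fun z : ℤ × ℤ => ((z.1 : ℝ)) * (μ z).toReal) ∧
    Summable (fun z : ℤ × ℤ => ((z.2 : ℝ)) * (μ z).toReal) ∧
    ((∑' z : ℤ × ℤ, ((z.1 : ℝ)) * (μ z).toReal, ∑' z : ℤ × ℤ, ((z.2 : ℝ)) * (μ z).toReal)
      ≠ ((0 : ℝ), (0 : ℝ)))

/-- Hypothesis (H2): the random walk killed outside the quadrant is irreducible
on the quadrant. -/
def H2 (μ : ℤ × ℤ → ℝ≥0∞) : Prop :=
  ∀ z ∈ quadrant, ∀ z' ∈ quadrant, ∃ n : ℕ, 0 < nstepK μ quadrant n z z'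

/-- Hypothesis (H3): the jump generating function is finite everywhere on `ℝ²`. -/
def H3 (μ : ℤ × ℤ → ℝ≥0∞) : Prop := ∀ a : ℝ × ℝ, jumpGF μ a < ⊤

/-- `d` is a greatest common divisor of the set `K` of natural numbers. -/
def IsGcdOfSet (K : Set ℕ) (d : ℕ) : Prop :=
  (∀ k ∈ K, d ∣ k) ∧ ∀ c : ℕ, (∀ k ∈ K, c ∣ k) → c ∣ d

/-- First marginal of `μ`: step distribution of the coordinate walk `S₁`. -/
noncomputable def marg1 (μ : ℤ × ℤ → ℝ≥0∞) : ℤ → ℝ≥0∞ := fun x => ∑' y : ℤ, μ (x, y)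

/-- Second marginal of `μ`: step distribution of the coordinate walk `S₂`. -/
noncomputable def marg2 (μ : ℤ × ℤ → ℝ≥0∞) : ℤ → ℝ≥0∞ := fun y => ∑' x : ℤ, μ (x, y)

/-- Hypothesis (H4): the coordinate random walks `S₁` and `S₂` are aperiodic on `ℤ`. -/
def H4 (μ : ℤ × ℤ → ℝ≥0∞) : Prop :=
  IsGcdOfSet {k : ℕ | 0 < k ∧ 0 < nstep (marg1 μ) k (0 : ℤ) 0} 1 ∧
    IsGcdOfSet {k : ℕ | 0 < k ∧ 0 < nstep (marg2 μ) k (0 : ℤ) 0} 1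

/-- The set `𝒮²₊` of unit vectors of `ℝ²` with nonnegative coordinates. -/
def Spos : Set (ℝ × ℝ) := {q | 0 ≤ q.1 ∧ 0 ≤ q.2 ∧ norE q = 1}

/-- `aOf` is the map `q ↦ a(q)`, the inverse of the homeomorphism
`a ↦ ∇φ(a)/|∇φ(a)|` from `∂D` onto the unit circle (extended to all nonzero `q` by
homogeneity).  Equivalently, `a(q)` is the unique point of `D = {a : φ(a) ≤ 1}` where
the linear functional `a ↦ a·q` attains its maximum over `D`, and it lies on `∂D`. -/
def IsDirMap (μ : ℤ × ℤ → ℝ≥0∞) (aOf : ℝ × ℝ → ℝ × ℝ) : Prop :=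
  ∀ q : ℝ × ℝ, q ≠ 0 →
    jumpGF μ (aOf q) = 1 ∧
      ∀ a : ℝ × ℝ, jumpGF μ a ≤ 1 → a ≠ aOf q → dot a q < dot (aOf q) q

/-- The arc `Γ₊ = {a ∈ ∂D : q(a) ∈ 𝒮²₊}`. -/
def GammaPlus (aOf : ℝ × ℝ → ℝ × ℝ) : Set (ℝ × ℝ) := {a | ∃ q ∈ Spos, a = aOf q}

/-- The integrand appearing in the boundary term of `h_a`. -/
noncomputable def haIntegrand (aOf : ℝ × ℝ → ℝ × ℝ) (a : ℝ × ℝ) (w : ℤ × ℤ) : ℝ :=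
  if a = aOf ((0 : ℝ), (1 : ℝ)) then (w.1 : ℝ) * Real.exp (dot a (toR w))
  else if a = aOf ((1 : ℝ), (0 : ℝ)) then (w.2 : ℝ) * Real.exp (dot a (toR w))
  else Real.exp (dot a (toR w))

/-- The leading term of `h_a`. -/
noncomputable def haLead (aOf : ℝ × ℝ → ℝ × ℝ) (a : ℝ × ℝ) (z : ℤ × ℤ) : ℝ :=
  if a = aOf ((0 : ℝ), (1 : ℝ)) then (z.1 : ℝ) * Real.exp (dot a (toR z))
  else if a = aOf ((1 : ℝ), (0 : ℝ)) then (z.2 : ℝ) * Real.exp (dot a (toR z))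
  else Real.exp (dot a (toR z))

/-- The harmonic function `h_a` of the killed random walk, defined by (1.3). -/
noncomputable def haFun (μ : ℤ × ℤ → ℝ≥0∞) (aOf : ℝ × ℝ → ℝ × ℝ) (a : ℝ × ℝ)
    (z : ℤ × ℤ) : ℝ :=
  haLead aOf a z - EexitR μ quadrant z (haIntegrand aOf a)

/-- Expectation over the event `{τ = τ₁ < τ₂}`, i.e. the walk exits the quadrant
through the boundary `{w : w₁ ≤ 0, w₂ > 0}`. -/
noncomputable def Eexit1 (μ : ℤ × ℤ → ℝ≥0∞) (z : ℤ × ℤ) (f : ℤ × ℤ → ℝ≥0∞) : ℝ≥0∞ :=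
  ∑' w : ℤ × ℤ, (if w.1 ≤ 0 ∧ 0 < w.2 then exitK μ quadrant z w * f w else 0)

/-- The support function `w ↦ a(w)·w = max_{a ∈ D} a·w`, with the convention that it
vanishes at `w = 0`. -/
noncomputable def support (aOf : ℝ × ℝ → ℝ × ℝ) (w : ℝ × ℝ) : ℝ :=
  if w = 0 then 0 else dot (aOf w) w

/-- The function `λ_ε(q,w) = a(w)·w + a(q-w)·(q-w) - ε|w|`. -/
noncomputable def lamEps (aOf : ℝ × ℝ → ℝ × ℝ) (ε : ℝ) (q w : ℝ × ℝ) : ℝ :=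
  support aOf w + support aOf (q - w) - ε * norE w

/-- The principal part `Ξ^q_δ(z,zₙ)` of the renewal equation. -/
noncomputable def XiQ (μ : ℤ × ℤ → ℝ≥0∞) (q : ℝ × ℝ) (δ : ℝ) (z zn : ℤ × ℤ) : ℝ :=
  if q = ((1 : ℝ), (0 : ℝ)) then
    (greenK μ upperHalf z zn).toReal -
      ∑' w : ℤ × ℤ, (exitK μ quadrant z w).toReal *
        (if w.1 ≤ 0 ∧ 0 < w.2 ∧ normZ w < δ * normZ zn then
          (greenK μ upperHalf w zn).toReal else 0)
  else if q = ((0 : ℝ), (1 : ℝ)) then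
    (greenK μ rightHalf z zn).toReal -
      ∑' w : ℤ × ℤ, (exitK μ quadrant z w).toReal *
        (if w.2 ≤ 0 ∧ 0 < w.1 ∧ normZ w < δ * normZ zn then
          (greenK μ rightHalf w zn).toReal else 0)
  else
    (green μ z zn).toReal -
      ∑' w : ℤ × ℤ, (exitK μ quadrant z w).toReal *
        (if normZ w < δ * normZ zn then (green μ w zn).toReal else 0)



namespace L42
noncomputable def eR (b : ℝ × ℝ) (s : ℤ × ℤ) : ℝ := Real.exp (dot b (toR s))

lemma eR_pos (b : ℝ × ℝ) (s : ℤ × ℤ) : 0 < eR b s := Real.exp_pos _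

lemma eR_nonneg (b : ℝ × ℝ) (s : ℤ × ℤ) : 0 ≤ eR b s := (eR_pos b s).le

lemma dot_toR_add (b : ℝ × ℝ) (u s : ℤ × ℤ) :
    dot b (toR (u + s)) = dot b (toR u) + dot b (toR s) := by
  simp only [dot, toR, Prod.fst_add, Prod.snd_add]
  push_cast; ring

lemma eR_add (b : ℝ × ℝ) (u s : ℤ × ℤ) : eR b (u + s) = eR b u * eR b s := by
  rw [eR, dot_toR_add, Real.exp_add]; rfl

/-- vertical shift -/
lemma eR_vshift (b : ℝ × ℝ) (t : ℝ) (s : ℤ × ℤ) :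
    eR (b + ((0 : ℝ), t)) s = eR b s * Real.exp (t * (s.2 : ℝ)) := by
  simp only [eR, dot, toR, Prod.fst_add, Prod.snd_add, ← Real.exp_add]
  ring_nf

lemma eR_sub_e2 (b : ℝ × ℝ) (s : ℤ × ℤ) :
    eR (b - ((0 : ℝ), (1 : ℝ))) s = eR b s * Real.exp (-(s.2 : ℝ)) := by
  have : b - ((0 : ℝ), (1 : ℝ)) = b + ((0 : ℝ), (-1 : ℝ)) := by
    apply Prod.ext <;> simp <;> ring
  rw [this, eR_vshift]
  ring_nf

section mu
variable {μ : ℤ × ℤ → ℝ≥0∞}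

lemma mu_ne_top (hprob : ∑' z : ℤ × ℤ, μ z = 1) (s : ℤ × ℤ) : μ s ≠ ⊤ := by
  have h := ENNReal.le_tsum (f := μ) s
  rw [hprob] at h
  exact (h.trans_lt ENNReal.one_lt_top).ne

lemma jumpGF_term_toReal (b : ℝ × ℝ) (hprob : ∑' z : ℤ × ℤ, μ z = 1) (s : ℤ × ℤ) :
    (μ s * ENNReal.ofReal (Real.exp (dot b (toR s)))).toReal = (μ s).toReal * eR b s := by
  rw [ENNReal.toReal_mul, ENNReal.toReal_ofReal (Real.exp_nonneg _)]; rfl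

lemma summable_jump (hprob : ∑' z : ℤ × ℤ, μ z = 1) (h3 : ∀ a : ℝ × ℝ, jumpGF μ a < ⊤)
    (b : ℝ × ℝ) : Summable (fun s => (μ s).toReal * eR b s) := by
  have h := ENNReal.summable_toReal (f := fun s : ℤ × ℤ =>
    μ s * ENNReal.ofReal (Real.exp (dot b (toR s)))) (h3 b).ne
  exact h.congr (fun s => jumpGF_term_toReal b hprob s)

lemma tsum_jump (hprob : ∑' z : ℤ × ℤ, μ z = 1) (h3 : ∀ a : ℝ × ℝ, jumpGF μ a < ⊤)
    (b : ℝ × ℝ) : ∑' s : ℤ × ℤ, (μ s).toReal * eR b s = (jumpGF μ b).toReal := by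
  rw [jumpGF, ENNReal.tsum_toReal_eq]
  · exact tsum_congr fun s => (jumpGF_term_toReal b hprob s).symm
  · intro s
    exact ENNReal.mul_ne_top (mu_ne_top hprob s) ENNReal.ofReal_ne_top

end mu

/-- elementary exponential bound -/
lemma expb (x : ℝ) : Real.exp x ≤ 1 + x + x ^ 2 * Real.exp |x| := by
  have h1 : (1 : ℝ) ≤ Real.exp |x| := by
    rw [Real.one_le_exp_iff]; positivity
  rcases le_or_gt |x| 1 with h | h
  · have := Real.abs_exp_sub_one_sub_id_le h
    nlinarith [abs_le.mp this, sq_nonneg x]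
  · rcases le_or_gt x 0 with hx | hx
    · have hx1 : x ≤ -1 := by
        rcases abs_cases x with ⟨h1, _⟩ | ⟨h2, _⟩ <;> linarith
      have : Real.exp x ≤ 1 := Real.exp_le_one_iff.mpr hx
      nlinarith [sq_nonneg x]
    · have hx1 : 1 ≤ x := by
        rcases abs_cases x with ⟨h1', _⟩ | ⟨h2, _⟩ <;> linarith
      have hax : |x| = x := abs_of_pos hx
      rw [hax]
      nlinarith [Real.exp_pos x, sq_nonneg (x - 1)]

lemma self_le_exp (x : ℝ) : x ≤ Real.exp x := by
  have := Real.add_one_le_exp x; linarith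

-- Chunk 2 proper
/-- tail smallness for nonneg summable functions -/
lemma tail_small {G : ℤ × ℤ → ℝ} (hG0 : ∀ s, 0 ≤ G s) (hG : Summable G) {ε : ℝ}
    (hε : 0 < ε) : ∃ N : ℕ, 1 ≤ N ∧ ∑' s : ℤ × ℤ, (if s.2 ≤ -(N : ℤ) then G s else 0) ≤ ε := by
  have htend := tendsto_tsum_compl_atTop_zero G
  have hev : ∀ᶠ F : Finset (ℤ × ℤ) in atTop,
      (∑' x : { x : ℤ × ℤ // x ∉ F }, G ↑x) < ε := htend.eventually_lt_const hε
  obtain ⟨F, hF⟩ := hev.exists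
  refine ⟨F.sup (fun s => (-s.2).toNat) + 1, le_add_self, ?_⟩
  set N : ℕ := F.sup (fun s => (-s.2).toNat) + 1 with hN
  have hs2 : Summable (fun s : ℤ × ℤ => if s ∈ F then 0 else G s) :=
    hG.of_nonneg_of_le (fun s => by by_cases h : s ∈ F <;> simp [h, hG0 s])
      (fun s => by by_cases h : s ∈ F <;> simp [h, hG0 s])
  have hsub : ∑' s : ℤ × ℤ, (if s.2 ≤ -(N : ℤ) then G s else 0)
      ≤ ∑' s : ℤ × ℤ, (if s ∈ F then 0 else G s) := by
    apply Summable.tsum_le_tsum _ _ hs2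
    · intro s
      by_cases h : s.2 ≤ -(N : ℤ)
      · have hsF : s ∉ F := by
          intro hmem
          have h1 : (-s.2).toNat ≤ N - 1 :=
            (Finset.le_sup (f := fun s : ℤ × ℤ => (-s.2).toNat) hmem).trans (by omega)
          have h2 : (N : ℤ) ≤ -s.2 := by omega
          have h3 : ((-s.2).toNat : ℤ) = -s.2 := Int.toNat_of_nonneg (by omega)
          omega
        simp [h, hsF]
      · simp only [h, if_false]
        by_cases h2 : s ∈ F <;> simp [h2, hG0 s]
    · exact hG.of_nonneg_of_le (fun s => by by_cases h : s.2 ≤ -(N:ℤ) <;> simp [h, hG0 s])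
        (fun s => by by_cases h : s.2 ≤ -(N:ℤ) <;> simp [h, hG0 s])
  have heq : (∑' x : { x : ℤ × ℤ // x ∉ F }, G ↑x)
      = ∑' s : ℤ × ℤ, (if s ∈ F then 0 else G s) := by
    calc (∑' x : { x : ℤ × ℤ // x ∉ F }, G ↑x)
        = ∑' x : ℤ × ℤ, ((↑F : Set (ℤ × ℤ))ᶜ).indicator G x := tsum_subtype _ G
      _ = ∑' s : ℤ × ℤ, (if s ∈ F then 0 else G s) := by
          apply tsum_congr; intro s
          by_cases h : s ∈ F <;> simp [Set.indicator, h]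
  linarith [hsub, heq ▸ hF]

/-- from `φ(a+te₂) > 1` for all `t ≠ 0`, conclude vertical drift `c2 ≤ 0`. -/
lemma c2_nonpos {μ : ℤ × ℤ → ℝ≥0∞} {a : ℝ × ℝ}
    (hsum : ∀ b : ℝ × ℝ, Summable (fun s => (μ s).toReal * eR b s))
    (hone : ∑' s : ℤ × ℤ, (μ s).toReal * eR a s = 1)
    (hgt : ∀ t : ℝ, t ≠ 0 → t ≥ -1 → 1 < ∑' s : ℤ × ℤ, (μ s).toReal * eR (a + ((0 : ℝ), t)) s) :
    ∑' s : ℤ × ℤ, (μ s).toReal * eR a s * (s.2 : ℝ) ≤ 0 := by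
  have hm0 : ∀ s : ℤ × ℤ, 0 ≤ (μ s).toReal * eR a s :=
    fun s => mul_nonneg ENNReal.toReal_nonneg (eR_nonneg a s)
  have hdom3 : ∀ s : ℤ × ℤ, (s.2 : ℝ) ^ 2 * Real.exp |(s.2 : ℝ)| ≤
      Real.exp (3 * (s.2 : ℝ)) + Real.exp (3 * -(s.2 : ℝ)) := by
    intro s
    set x := (s.2 : ℝ) with hxdef
    have key : x ^ 2 * Real.exp |x| ≤ Real.exp (3 * |x|) := by
      rw [show (3:ℝ) * |x| = |x| + |x| + |x| by ring, Real.exp_add, Real.exp_add]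
      have h1 : |x| ≤ Real.exp |x| := self_le_exp |x|
      have h2 : x ^ 2 ≤ Real.exp |x| * Real.exp |x| := by nlinarith [abs_nonneg x, sq_abs x]
      nlinarith [Real.exp_pos |x|]
    refine key.trans ?_
    rcases abs_cases x with ⟨h, _⟩ | ⟨h, _⟩ <;> rw [h]
    · linarith [Real.exp_pos (3 * -x)]
    · linarith [Real.exp_pos (3 * x)]
  have hsplit : Summable (fun s : ℤ × ℤ =>
      (μ s).toReal * eR a s * Real.exp (3 * (s.2:ℝ))
        + (μ s).toReal * eR a s * Real.exp (3 * -(s.2:ℝ))) := by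
    apply Summable.congr ((hsum (a + ((0:ℝ), 3))).add (hsum (a + ((0:ℝ), -3))))
    intro s
    rw [eR_vshift, eR_vshift]
    ring
  have hsumR : Summable (fun s : ℤ × ℤ =>
      (μ s).toReal * eR a s * ((s.2 : ℝ) ^ 2 * Real.exp |(s.2 : ℝ)|)) := by
    apply Summable.of_nonneg_of_le
      (fun s => mul_nonneg (hm0 s) (by positivity)) (fun s => ?_) hsplit
    calc (μ s).toReal * eR a s * ((s.2 : ℝ) ^ 2 * Real.exp |(s.2 : ℝ)|)
        ≤ (μ s).toReal * eR a s * (Real.exp (3 * (s.2:ℝ)) + Real.exp (3 * -(s.2:ℝ))) :=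
          mul_le_mul_of_nonneg_left (hdom3 s) (hm0 s)
      _ = _ := by ring
  have hsumc : Summable (fun s : ℤ × ℤ => (μ s).toReal * eR a s * (s.2 : ℝ)) := by
    apply Summable.of_abs
    apply Summable.of_nonneg_of_le (fun s => abs_nonneg _) (fun s => ?_) hsumR
    rw [abs_mul, abs_of_nonneg (hm0 s)]
    have h1 : (1:ℝ) ≤ Real.exp |(s.2:ℝ)| := Real.one_le_exp (abs_nonneg _)
    have h2 : |(s.2:ℝ)| ≤ (s.2:ℝ) ^ 2 := by
      have hint : |s.2| ≤ s.2 ^ 2 := by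
        rcases eq_or_ne s.2 0 with h | h
        · simp [h]
        · have h1' : (1:ℤ) ≤ |s.2| := Int.one_le_abs h
          nlinarith [sq_abs s.2]
      calc |(s.2:ℝ)| = ((|s.2| : ℤ) : ℝ) := by push_cast [Int.cast_abs]; rfl
        _ ≤ (((s.2 ^ 2 : ℤ)) : ℝ) := by exact_mod_cast hint
        _ = (s.2:ℝ) ^ 2 := by push_cast; ring
    have h3 : |(s.2:ℝ)| ≤ (s.2:ℝ) ^ 2 * Real.exp |(s.2:ℝ)| := by nlinarith [sq_nonneg (s.2:ℝ)]
    exact mul_le_mul_of_nonneg_left h3 (hm0 s)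
  set c2 := ∑' s : ℤ × ℤ, (μ s).toReal * eR a s * (s.2 : ℝ) with hc2
  set R := ∑' s : ℤ × ℤ, (μ s).toReal * eR a s * ((s.2 : ℝ) ^ 2 * Real.exp |(s.2 : ℝ)|) with hR
  have hR0 : 0 ≤ R := tsum_nonneg (fun s => mul_nonneg (hm0 s) (by positivity))
  have key : ∀ t : ℝ, -1 ≤ t → t ≤ 1 →
      (∑' s : ℤ × ℤ, (μ s).toReal * eR (a + ((0:ℝ), t)) s) ≤ 1 + t * c2 + t ^ 2 * R := by
    intro t ht1 ht2
    have habs : |t| ≤ 1 := abs_le.mpr ⟨ht1, ht2⟩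
    have hpt : ∀ s : ℤ × ℤ, (μ s).toReal * eR (a + ((0:ℝ), t)) s ≤
        (μ s).toReal * eR a s + t * ((μ s).toReal * eR a s * (s.2:ℝ))
          + t ^ 2 * ((μ s).toReal * eR a s * ((s.2:ℝ)^2 * Real.exp |(s.2:ℝ)|)) := by
      intro s
      rw [eR_vshift, ← mul_assoc]
      have hexp : Real.exp (t * (s.2:ℝ)) ≤ 1 + t * (s.2:ℝ)
          + (t * (s.2:ℝ)) ^ 2 * Real.exp |t * (s.2:ℝ)| := expb _
      have hxb : (t * (s.2:ℝ)) ^ 2 * Real.exp |t * (s.2:ℝ)|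
          ≤ t ^ 2 * ((s.2:ℝ)^2 * Real.exp |(s.2:ℝ)|) := by
        have h1 : |t * (s.2:ℝ)| ≤ |(s.2:ℝ)| := by
          rw [abs_mul]
          calc |t| * |(s.2:ℝ)| ≤ 1 * |(s.2:ℝ)| :=
            mul_le_mul_of_nonneg_right habs (abs_nonneg _)
          _ = |(s.2:ℝ)| := one_mul _
        have h2 := Real.exp_le_exp.mpr h1
        rw [mul_pow]
        have h4 : (0:ℝ) ≤ t ^ 2 * (s.2:ℝ) ^ 2 := by positivity
        nlinarith
      calc (μ s).toReal * eR a s * Real.exp (t * (s.2:ℝ))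
          ≤ (μ s).toReal * eR a s * (1 + t * (s.2:ℝ)
              + t ^ 2 * ((s.2:ℝ)^2 * Real.exp |(s.2:ℝ)|)) :=
            mul_le_mul_of_nonneg_left (by linarith) (hm0 s)
        _ = _ := by ring
    have hrhs2 : Summable (fun s : ℤ × ℤ => t * ((μ s).toReal * eR a s * (s.2:ℝ))
        + t ^ 2 * ((μ s).toReal * eR a s * ((s.2:ℝ)^2 * Real.exp |(s.2:ℝ)|))) :=
      (hsumc.mul_left t).add (hsumR.mul_left (t^2))
    calc (∑' s : ℤ × ℤ, (μ s).toReal * eR (a + ((0:ℝ), t)) s)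
        ≤ ∑' s : ℤ × ℤ, ((μ s).toReal * eR a s + (t * ((μ s).toReal * eR a s * (s.2:ℝ))
            + t ^ 2 * ((μ s).toReal * eR a s * ((s.2:ℝ)^2 * Real.exp |(s.2:ℝ)|)))) := by
          apply Summable.tsum_le_tsum _ (hsum _) ((hsum a).add hrhs2)
          intro s
          have := hpt s
          linarith
      _ = 1 + (t * c2 + t ^ 2 * R) := by
          rw [Summable.tsum_add (hsum a) hrhs2, hone,
            Summable.tsum_add (hsumc.mul_left t) (hsumR.mul_left (t^2)), tsum_mul_left, tsum_mul_left]
      _ = 1 + t * c2 + t ^ 2 * R := by ring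
  by_contra hpos
  push_neg at hpos
  set t : ℝ := -(min 1 (c2 / (R + 1)) / 2) with hts
  clear_value t
  have hmin0 : 0 < min 1 (c2 / (R + 1)) := by
    apply lt_min one_pos
    positivity
  have ht0 : t < 0 := by rw [hts]; linarith
  have ht1 : -1 ≤ t := by
    have : min 1 (c2 / (R + 1)) ≤ 1 := min_le_left _ _
    rw [hts]; linarith
  have hgt' := hgt t (by linarith) (by linarith)
  have hkey := key t ht1 (by linarith)
  have hlt : t * c2 + t ^ 2 * R < 0 := by
    have habs : -t ≤ c2 / (R + 1) / 2 := by rw [hts]; linarith [min_le_right 1 (c2 / (R+1))]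
    have h3 : c2 / (R + 1) * R ≤ c2 := by
      rw [div_mul_eq_mul_div, div_le_iff₀ (by positivity)]
      nlinarith
    have h2 : -t * R ≤ c2 / (R + 1) / 2 * R := mul_le_mul_of_nonneg_right habs hR0
    have h4 : -t * R ≤ c2 / 2 := by
      have : c2 / (R + 1) / 2 * R = c2 / (R + 1) * R / 2 := by ring
      rw [this] at h2
      linarith
    have h6 : -t * (-t * R) ≤ -t * (c2 / 2) := mul_le_mul_of_nonneg_left h4 (by linarith)
    have h8 : t ^ 2 * R = -t * (-t * R) := by ring
    have h9 : t * c2 < 0 := mul_neg_of_neg_of_pos ht0 hpos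
    rw [h8]
    have h10 : t * c2 + -t * (-t * R) ≤ t * c2 + -t * (c2 / 2) := by linarith
    have h11 : t * c2 + -t * (c2 / 2) = (1/2) * (t * c2) := by ring
    refine lt_of_le_of_lt (h10.trans_eq h11) ?_
    linarith
  linarith
/-- The 1-d supermartingale inequality controlling south exits. -/
lemma mainr {μ : ℤ × ℤ → ℝ≥0∞} {a : ℝ × ℝ}
    (hsum : ∀ b : ℝ × ℝ, Summable (fun s => (μ s).toReal * eR b s))
    (hone : ∑' s : ℤ × ℤ, (μ s).toReal * eR a s = 1)
    (hpsi : 1 < ∑' s : ℤ × ℤ, (μ s).toReal * eR (a - ((0:ℝ),(1:ℝ))) s) :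
    ∃ K : ℝ, 1 ≤ K ∧ ∀ y : ℤ, 1 ≤ y →
      Summable (fun s : ℤ × ℤ => (μ s).toReal * (eR a s *
        (if 1 ≤ y + s.2 then K - Real.exp (-((y + s.2 : ℤ) : ℝ))
          else -((y + s.2 : ℤ) : ℝ)))) ∧
      (∑' s : ℤ × ℤ, (μ s).toReal * (eR a s *
        (if 1 ≤ y + s.2 then K - Real.exp (-((y + s.2 : ℤ) : ℝ))
          else -((y + s.2 : ℤ) : ℝ))))
        ≤ K - Real.exp (-(y : ℝ)) := by
  classical
  set G2 : ℤ × ℤ → ℝ := fun s => (μ s).toReal * eR (a - ((0:ℝ),(1:ℝ))) s with hG2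
  have hG2sum : Summable G2 := hsum _
  have hG2v : ∀ s : ℤ × ℤ, G2 s = (μ s).toReal * eR a s * Real.exp (-(s.2:ℝ)) := by
    intro s; simp only [hG2]; rw [eR_sub_e2]; ring
  have hG20 : ∀ s, 0 ≤ G2 s := fun s => mul_nonneg ENNReal.toReal_nonneg (eR_nonneg _ s)
  have hm0 : ∀ s : ℤ × ℤ, 0 ≤ (μ s).toReal * eR a s :=
    fun s => mul_nonneg ENNReal.toReal_nonneg (eR_nonneg a s)
  set ψ := ∑' s : ℤ × ℤ, G2 s with hψ
  set δ := ψ - 1 with hδ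
  have hδ0 : 0 < δ := by rw [hδ]; linarith
  obtain ⟨N, hN1, hNtail⟩ := tail_small hG20 hG2sum (ε := δ/2) (by linarith)
  refine ⟨2 * Real.exp N, ?_, ?_⟩
  · have := Real.one_le_exp (by positivity : (0:ℝ) ≤ (N:ℝ)); linarith
  intro y hy
  set K := 2 * Real.exp N with hK
  have hK1 : 1 ≤ K := by
    have := Real.one_le_exp (by positivity : (0:ℝ) ≤ (N:ℝ)); rw [hK]; linarith
  have hey1 : Real.exp (-(y:ℝ)) ≤ 1 := by
    rw [Real.exp_le_one_iff]
    simp only [neg_nonpos]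
    have : (0:ℤ) ≤ y := by omega
    exact_mod_cast this
  have hcast : ∀ s : ℤ × ℤ, Real.exp (-((y + s.2 : ℤ) : ℝ))
      = Real.exp (-(y:ℝ)) * Real.exp (-(s.2:ℝ)) := by
    intro s; rw [← Real.exp_add]; push_cast; ring_nf
  set w1 : ℤ × ℤ → ℝ := fun s =>
    if 1 ≤ y + s.2 then K - Real.exp (-((y + s.2 : ℤ) : ℝ)) else -((y + s.2 : ℤ) : ℝ) with hw1
  set F : ℤ × ℤ → ℝ := fun s => (μ s).toReal * (eR a s * w1 s) with hF
  set B : ℤ × ℤ → ℝ := fun s =>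
    K * ((μ s).toReal * eR a s) - Real.exp (-(y:ℝ)) * G2 s with hB
  have hw1abs : ∀ s : ℤ × ℤ, |w1 s| ≤ K + Real.exp (-(s.2:ℝ)) := by
    intro s
    rw [hw1]
    by_cases h : 1 ≤ y + s.2
    · simp only [h, if_true]
      have h1 : (1:ℝ) ≤ ((y + s.2 : ℤ) : ℝ) := by exact_mod_cast h
      have h2 : Real.exp (-((y + s.2 : ℤ) : ℝ)) ≤ 1 := by
        rw [Real.exp_le_one_iff]; linarith
      have h3 := Real.exp_pos (-((y + s.2 : ℤ) : ℝ))
      rw [abs_of_nonneg (by linarith)]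
      have := Real.exp_pos (-(s.2:ℝ))
      linarith
    · simp only [h, if_false]
      push_neg at h
      have h0 : (y + s.2 : ℤ) ≤ 0 := by omega
      have h1 : (0:ℝ) ≤ -((y + s.2 : ℤ) : ℝ) := by
        simp only [neg_nonneg]; exact_mod_cast h0
      rw [abs_of_nonneg h1]
      have h2 : -((y + s.2 : ℤ) : ℝ) ≤ Real.exp (-((y + s.2 : ℤ) : ℝ)) := self_le_exp _
      have h3 : Real.exp (-((y + s.2 : ℤ) : ℝ)) ≤ Real.exp (-(s.2:ℝ)) := by
        rw [hcast s]
        nlinarith [Real.exp_pos (-(s.2:ℝ)), Real.exp_pos (-(y:ℝ))]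
      linarith
  have hFsum : Summable F := by
    apply Summable.of_abs
    apply Summable.of_nonneg_of_le (fun s => abs_nonneg _) (fun s => ?_)
      (((hsum a).mul_left K).add hG2sum)
    rw [hF]
    simp only
    rw [abs_mul, abs_mul, abs_of_nonneg (ENNReal.toReal_nonneg),
      abs_of_nonneg (eR_nonneg a s), ← mul_assoc]
    calc (μ s).toReal * eR a s * |w1 s|
        ≤ (μ s).toReal * eR a s * (K + Real.exp (-(s.2:ℝ))) :=
          mul_le_mul_of_nonneg_left (hw1abs s) (hm0 s)
      _ = K * ((μ s).toReal * eR a s) + G2 s := by rw [hG2v s]; ring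
  have hBsum : Summable B :=
    ((hsum a).mul_left K).sub (hG2sum.mul_left (Real.exp (-(y:ℝ))))
  have hρsum : Summable (fun s => F s - B s) := hFsum.sub hBsum
  have htsumB : ∑' s : ℤ × ℤ, B s = K - Real.exp (-(y:ℝ)) * ψ := by
    rw [hB]
    rw [Summable.tsum_sub ((hsum a).mul_left K) (hG2sum.mul_left (Real.exp (-(y:ℝ))))]
    rw [tsum_mul_left, tsum_mul_left, hone, hψ, mul_one]
  -- pointwise bound on the remainder
  set rbar : ℤ × ℤ → ℝ := fun s =>
    2 * Real.exp (-(y:ℝ)) * (if s.2 ≤ -(N:ℤ) - y then G2 s else 0) with hrbar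
  have hrbar0 : ∀ s, 0 ≤ rbar s := by
    intro s; rw [hrbar]
    by_cases h : s.2 ≤ -(N:ℤ) - y
    · simp only [h, if_true]
      exact mul_nonneg (by positivity) (hG20 s)
    · simp [h]
  have hrbarsum : Summable rbar := by
    apply (hG2sum.mul_left (2 * Real.exp (-(y:ℝ)))).of_nonneg_of_le hrbar0
    intro s
    rw [hrbar]
    by_cases h : s.2 ≤ -(N:ℤ) - y
    · simp [h]
    · simp only [h, if_false, mul_zero]
      exact mul_nonneg (by positivity) (hG20 s)
  have hρle : ∀ s : ℤ × ℤ, F s - B s ≤ rbar s := by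
    intro s
    have hBv : B s = (μ s).toReal * eR a s * (K - Real.exp (-((y + s.2 : ℤ) : ℝ))) := by
      simp only [hB]
      rw [hG2v s, hcast s]; ring
    have hFv : F s = (μ s).toReal * eR a s * w1 s := by rw [hF]; ring
    rw [hFv, hBv, ← mul_sub]
    by_cases h : 1 ≤ y + s.2
    · have : w1 s - (K - Real.exp (-((y + s.2 : ℤ) : ℝ))) = 0 := by
        rw [hw1]; simp [h]
      rw [this, mul_zero]
      exact hrbar0 s
    · push_neg at h
      have h0 : (y + s.2 : ℤ) ≤ 0 := by omega
      have hu0 : (0:ℝ) ≤ -((y + s.2 : ℤ) : ℝ) := by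
        simp only [neg_nonneg]; exact_mod_cast h0
      have hrv : w1 s - (K - Real.exp (-((y + s.2 : ℤ) : ℝ)))
          = -((y + s.2 : ℤ) : ℝ) + Real.exp (-((y + s.2 : ℤ) : ℝ)) - K := by
        simp only [hw1]
        rw [if_neg (by omega : ¬ 1 ≤ y + s.2)]
        ring
      rw [hrv, hrbar]
      by_cases h2 : s.2 ≤ -(N:ℤ) - y
      · simp only [h2, if_true]
        have hb : -((y + s.2 : ℤ) : ℝ) + Real.exp (-((y + s.2 : ℤ) : ℝ)) - K
            ≤ 2 * Real.exp (-((y + s.2 : ℤ) : ℝ)) := by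
          have := self_le_exp (-((y + s.2 : ℤ) : ℝ))
          linarith
        calc (μ s).toReal * eR a s * (-((y + s.2 : ℤ) : ℝ) + Real.exp (-((y + s.2 : ℤ) : ℝ)) - K)
            ≤ (μ s).toReal * eR a s * (2 * Real.exp (-((y + s.2 : ℤ) : ℝ))) :=
              mul_le_mul_of_nonneg_left hb (hm0 s)
          _ = 2 * Real.exp (-(y:ℝ)) * G2 s := by rw [hcast s, hG2v s]; ring
      · simp only [h2, if_false, mul_zero]
        push_neg at h2
        have hu : -((y + s.2 : ℤ) : ℝ) ≤ (N:ℝ) := by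
          have h5 : -(N:ℤ) ≤ y + s.2 := by omega
          have h6 : ((-(N:ℤ) : ℤ) : ℝ) ≤ ((y + s.2 : ℤ) : ℝ) := by exact_mod_cast h5
          push_cast at h6 ⊢
          linarith
        have hexpu : Real.exp (-((y + s.2 : ℤ) : ℝ)) ≤ Real.exp (N:ℝ) :=
          Real.exp_le_exp.mpr (hu.trans_eq rfl)
        have hNe : (N:ℝ) ≤ Real.exp (N:ℝ) := self_le_exp _
        have hrv2 : -((y + s.2 : ℤ) : ℝ) + Real.exp (-((y + s.2 : ℤ) : ℝ)) - K ≤ 0 := by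
          rw [hK]; linarith
        exact mul_nonpos_of_nonneg_of_nonpos (hm0 s) hrv2
  have hρtsum : ∑' s : ℤ × ℤ, (F s - B s) ≤ δ * Real.exp (-(y:ℝ)) := by
    calc ∑' s : ℤ × ℤ, (F s - B s) ≤ ∑' s : ℤ × ℤ, rbar s :=
          Summable.tsum_le_tsum hρle hρsum hrbarsum
      _ = 2 * Real.exp (-(y:ℝ)) * (∑' s : ℤ × ℤ, (if s.2 ≤ -(N:ℤ) - y then G2 s else 0)) := by
          rw [hrbar, tsum_mul_left]
      _ ≤ 2 * Real.exp (-(y:ℝ)) * (δ/2) := by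
          apply mul_le_mul_of_nonneg_left _ (by positivity)
          calc (∑' s : ℤ × ℤ, (if s.2 ≤ -(N:ℤ) - y then G2 s else 0))
              ≤ ∑' s : ℤ × ℤ, (if s.2 ≤ -(N:ℤ) then G2 s else 0) := by
                apply Summable.tsum_le_tsum _ _ _
                · intro s
                  by_cases h : s.2 ≤ -(N:ℤ) - y
                  · have h' : s.2 ≤ -(N:ℤ) := by omega
                    simp [h, h']
                  · simp only [h, if_false]
                    by_cases h' : s.2 ≤ -(N:ℤ) <;> simp [h', hG20 s]
                · exact hG2sum.of_nonneg_of_le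
                    (fun s => by by_cases h : s.2 ≤ -(N:ℤ) - y <;> simp [h, hG20 s])
                    (fun s => by by_cases h : s.2 ≤ -(N:ℤ) - y <;> simp [h, hG20 s])
                · exact hG2sum.of_nonneg_of_le
                    (fun s => by by_cases h : s.2 ≤ -(N:ℤ) <;> simp [h, hG20 s])
                    (fun s => by by_cases h : s.2 ≤ -(N:ℤ) <;> simp [h, hG20 s])
            _ ≤ δ/2 := hNtail
      _ = δ * Real.exp (-(y:ℝ)) := by ring
  have hsplitF : ∑' s : ℤ × ℤ, F s = (∑' s : ℤ × ℤ, B s) + ∑' s : ℤ × ℤ, (F s - B s) := by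
    rw [← Summable.tsum_add hBsum hρsum]
    apply tsum_congr; intro s; ring
  have hfinal : ∑' s : ℤ × ℤ, F s ≤ K - Real.exp (-(y:ℝ)) := by
    rw [hsplitF, htsumB]
    have : Real.exp (-(y:ℝ)) * ψ = Real.exp (-(y:ℝ)) * (1 + δ) := by rw [hδ]; ring
    rw [this]
    have := Real.exp_pos (-(y:ℝ))
    nlinarith [hρtsum]
  exact ⟨hFsum, hfinal⟩


-- ### ENNReal kernel machinery
section kernels
variable (μ : ℤ × ℤ → ℝ≥0∞)

lemma ite_tsum_flip {α : Type*} {P : Prop} [Decidable P] (f : α → ℝ≥0∞) :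
    (if P then (∑' x, f x) else 0) = ∑' x, (if P then f x else 0) := by
  split <;> simp

lemma nstepK_succ_mul (A : Set (ℤ × ℤ)) (z : ℤ × ℤ) (n : ℕ) (g : ℤ × ℤ → ℝ≥0∞) :
    ∑' w : ℤ × ℤ, nstepK μ A (n+1) z w * g w
      = ∑' v : ℤ × ℤ, nstepK μ A n z v * ∑' w : ℤ × ℤ, (if w ∈ A then μ (w - v) * g w else 0) := by
  have h1 : ∀ w : ℤ × ℤ, nstepK μ A (n+1) z w * g w
      = ∑' v : ℤ × ℤ, (if w ∈ A then nstepK μ A n z v * (μ (w - v) * g w) else 0) := by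
    intro w
    rw [show nstepK μ A (n+1) z w
        = A.indicator (fun u => ∑' v : ℤ × ℤ, nstepK μ A n z v * μ (u - v)) w from rfl]
    rw [Set.indicator_apply]
    by_cases hw : w ∈ A
    · simp only [hw, if_true]
      rw [← ENNReal.tsum_mul_right]
      apply tsum_congr; intro v; ring
    · simp [hw]
  calc ∑' w : ℤ × ℤ, nstepK μ A (n+1) z w * g w
      = ∑' w : ℤ × ℤ, ∑' v : ℤ × ℤ, (if w ∈ A then nstepK μ A n z v * (μ (w - v) * g w) else 0) :=
        tsum_congr h1
    _ = ∑' v : ℤ × ℤ, ∑' w : ℤ × ℤ, (if w ∈ A then nstepK μ A n z v * (μ (w - v) * g w) else 0) :=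
        ENNReal.tsum_comm
    _ = ∑' v : ℤ × ℤ, nstepK μ A n z v * ∑' w : ℤ × ℤ, (if w ∈ A then μ (w - v) * g w else 0) := by
        apply tsum_congr; intro v
        rw [← ENNReal.tsum_mul_left]
        apply tsum_congr; intro w
        by_cases hw : w ∈ A <;> simp [hw]

lemma nstepK_zero_mul (A : Set (ℤ × ℤ)) (z : ℤ × ℤ) (g : ℤ × ℤ → ℝ≥0∞) :
    ∑' v : ℤ × ℤ, nstepK μ A 0 z v * g v = g z := by
  rw [tsum_eq_single z]
  · simp [nstepK]
  · intro v hv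
    simp [nstepK, hv]

lemma nstepK_zero_of_not_mem {A : Set (ℤ × ℤ)} {z : ℤ × ℤ} (hz : z ∈ A) {v : ℤ × ℤ}
    (hv : v ∉ A) (n : ℕ) : nstepK μ A n z v = 0 := by
  cases n with
  | zero =>
      simp only [nstepK]
      rw [if_neg]
      rintro rfl; exact hv hz
  | succ n =>
      rw [show nstepK μ A (n+1) z v
        = A.indicator (fun u => ∑' w : ℤ × ℤ, nstepK μ A n z w * μ (u - w)) v from rfl]
      exact Set.indicator_of_notMem hv _

lemma exitK_mul (A : Set (ℤ × ℤ)) (z : ℤ × ℤ) (g : ℤ × ℤ → ℝ≥0∞) :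
    ∑' w : ℤ × ℤ, exitK μ A z w * g w
      = ∑' n : ℕ, ∑' v : ℤ × ℤ, nstepK μ A n z v *
          ∑' w : ℤ × ℤ, (if w ∈ A then 0 else μ (w - v) * g w) := by
  have h1 : ∀ w : ℤ × ℤ, exitK μ A z w * g w
      = ∑' n : ℕ, ∑' v : ℤ × ℤ,
          (if w ∈ A then 0 else nstepK μ A n z v * (μ (w - v) * g w)) := by
    intro w
    rw [exitK, Set.indicator_apply]
    by_cases hw : w ∈ A
    · simp [hw]
    · have hw' : w ∈ Aᶜ := hw
      simp only [hw', if_true, hw, if_false]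
      rw [← ENNReal.tsum_mul_right]
      apply tsum_congr; intro n
      rw [← ENNReal.tsum_mul_right]
      apply tsum_congr; intro v; ring
  calc ∑' w : ℤ × ℤ, exitK μ A z w * g w
      = ∑' w : ℤ × ℤ, ∑' n : ℕ, ∑' v : ℤ × ℤ,
          (if w ∈ A then 0 else nstepK μ A n z v * (μ (w - v) * g w)) := tsum_congr h1
    _ = ∑' n : ℕ, ∑' w : ℤ × ℤ, ∑' v : ℤ × ℤ,
          (if w ∈ A then 0 else nstepK μ A n z v * (μ (w - v) * g w)) := ENNReal.tsum_comm
    _ = ∑' n : ℕ, ∑' v : ℤ × ℤ, ∑' w : ℤ × ℤ,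
          (if w ∈ A then 0 else nstepK μ A n z v * (μ (w - v) * g w)) := by
        apply tsum_congr; intro n
        exact ENNReal.tsum_comm
    _ = _ := by
        apply tsum_congr; intro n
        apply tsum_congr; intro v
        rw [← ENNReal.tsum_mul_left]
        apply tsum_congr; intro w
        by_cases hw : w ∈ A <;> simp [hw]

lemma tsum_shift (v : ℤ × ℤ) (f : ℤ × ℤ → ℝ≥0∞) :
    ∑' w : ℤ × ℤ, μ (w - v) * f w = ∑' s : ℤ × ℤ, μ s * f (v + s) := by
  rw [← Equiv.tsum_eq (Equiv.addLeft v) (fun w => μ (w - v) * f w)]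
  apply tsum_congr; intro s
  simp only [Equiv.coe_addLeft, add_sub_cancel_left]

lemma ofReal_shift (hμtop : ∀ s : ℤ × ℤ, μ s ≠ ⊤) {X : ℤ × ℤ → ℝ} (hX : ∀ s, 0 ≤ X s)
    (hXsum : Summable (fun s => (μ s).toReal * X s)) :
    ∑' s : ℤ × ℤ, μ s * ENNReal.ofReal (X s)
      = ENNReal.ofReal (∑' s : ℤ × ℤ, (μ s).toReal * X s) := by
  rw [ENNReal.ofReal_tsum_of_nonneg
    (fun s => mul_nonneg ENNReal.toReal_nonneg (hX s)) hXsum]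
  apply tsum_congr; intro s
  rw [ENNReal.ofReal_mul ENNReal.toReal_nonneg, ENNReal.ofReal_toReal (hμtop s)]

lemma tsum_nat_le_of_partial {f : ℕ → ℝ≥0∞} {c : ℝ≥0∞}
    (h : ∀ n : ℕ, ∑ k ∈ Finset.range n, f k ≤ c) : ∑' n : ℕ, f n ≤ c := by
  rw [ENNReal.tsum_eq_iSup_sum]
  apply iSup_le
  intro F
  have hsub : F ⊆ Finset.range (F.sup id + 1) := by
    intro k hk
    exact Finset.mem_range.mpr (Nat.lt_succ_of_le (Finset.le_sup (f := id) hk))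
  exact (Finset.sum_le_sum_of_subset hsub).trans (h _)

end kernels

section steps
variable {μ : ℤ × ℤ → ℝ≥0∞} {a : ℝ × ℝ} {K : ℝ}

/-- the nonnegative weight used in the 1-d inequality -/
noncomputable def w1v (K : ℝ) (y : ℤ) (s : ℤ × ℤ) : ℝ :=
  if 1 ≤ y + s.2 then K - Real.exp (-((y + s.2 : ℤ) : ℝ)) else -((y + s.2 : ℤ) : ℝ)

lemma w1v_nonneg (hK1 : 1 ≤ K) (y : ℤ) (s : ℤ × ℤ) : 0 ≤ w1v K y s := by
  rw [w1v]
  by_cases h : 1 ≤ y + s.2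
  · simp only [h, if_true]
    have h1 : (0:ℝ) ≤ ((y + s.2 : ℤ) : ℝ) := by exact_mod_cast (by omega : (0:ℤ) ≤ y + s.2)
    have h2 : Real.exp (-((y + s.2 : ℤ) : ℝ)) ≤ 1 := by
      rw [Real.exp_le_one_iff]; linarith
    linarith
  · simp only [h, if_false, neg_nonneg]
    exact_mod_cast (by omega : (y + s.2 : ℤ) ≤ 0)

lemma snd_add (v s : ℤ × ℤ) : (v + s).2 = v.2 + s.2 := rfl

/-- branchwise identification of the combined weight -/
lemma comb_eq (hK1 : 1 ≤ K) (v : ℤ × ℤ) (hv2 : 1 ≤ v.2) (s : ℤ × ℤ) :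
    (if 1 ≤ (v + s).2 then ENNReal.ofReal (eR a (v+s) * (K - Real.exp (-((v+s).2:ℝ)))) else 0)
      + (if (v + s).2 ≤ 0 then ENNReal.ofReal (-(((v+s).2:ℤ):ℝ) * eR a (v+s)) else 0)
      = ENNReal.ofReal (eR a v) * ENNReal.ofReal (eR a s * w1v K v.2 s) := by
  rw [snd_add, w1v]
  by_cases h : 1 ≤ v.2 + s.2
  · rw [if_pos h, if_neg (by omega), if_pos h, add_zero,
      ← ENNReal.ofReal_mul (eR_nonneg a v)]
    congr 1
    rw [eR_add]
    push_cast
    ring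
  · rw [if_neg h, if_pos (by omega), if_neg h, zero_add,
      ← ENNReal.ofReal_mul (eR_nonneg a v)]
    congr 1
    rw [eR_add]
    push_cast
    ring

lemma stepA (hμtop : ∀ s : ℤ × ℤ, μ s ≠ ⊤) (hK1 : 1 ≤ K)
    (hmain : ∀ y : ℤ, 1 ≤ y →
      Summable (fun s : ℤ × ℤ => (μ s).toReal * (eR a s * w1v K y s)) ∧
      (∑' s : ℤ × ℤ, (μ s).toReal * (eR a s * w1v K y s)) ≤ K - Real.exp (-(y : ℝ)))
    (v : ℤ × ℤ) (hv2 : 1 ≤ v.2) :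
    (∑' w : ℤ × ℤ, (if w ∈ quadrant then
        μ (w - v) * ENNReal.ofReal (eR a w * (K - Real.exp (-(w.2:ℝ)))) else 0))
      + (∑' w : ℤ × ℤ, μ (w - v) *
          (if w.2 ≤ 0 then ENNReal.ofReal (-(w.2:ℝ) * eR a w) else 0))
      ≤ ENNReal.ofReal (eR a v * (K - Real.exp (-(v.2:ℝ)))) := by
  classical
  set Phi : ℤ × ℤ → ℝ≥0∞ :=
    fun w => ENNReal.ofReal (eR a w * (K - Real.exp (-(w.2:ℝ)))) with hPhi
  set negF : ℤ × ℤ → ℝ≥0∞ :=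
    fun w => if w.2 ≤ 0 then ENNReal.ofReal (-(w.2:ℝ) * eR a w) else 0 with hnegF
  have step1 : (∑' w : ℤ × ℤ, (if w ∈ quadrant then μ (w - v) * Phi w else 0))
      ≤ ∑' w : ℤ × ℤ, (if 1 ≤ w.2 then μ (w - v) * Phi w else 0) := by
    apply ENNReal.tsum_le_tsum
    intro w
    by_cases hw : w ∈ quadrant
    · have hw2 : 1 ≤ w.2 := hw.2
      simp [hw, hw2]
    · by_cases hw2 : 1 ≤ w.2 <;> simp [hw, hw2]
  have step2 : (∑' w : ℤ × ℤ, (if 1 ≤ w.2 then μ (w - v) * Phi w else 0))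
        + (∑' w : ℤ × ℤ, μ (w - v) * negF w)
      = ∑' w : ℤ × ℤ, μ (w - v) * ((if 1 ≤ w.2 then Phi w else 0) + negF w) := by
    rw [← ENNReal.tsum_add]
    apply tsum_congr
    intro w
    rw [mul_add]
    congr 1
    by_cases hw2 : 1 ≤ w.2 <;> simp [hw2]
  have step3 : (∑' w : ℤ × ℤ, μ (w - v) * ((if 1 ≤ w.2 then Phi w else 0) + negF w))
      = ∑' s : ℤ × ℤ, μ s * ((if 1 ≤ (v+s).2 then Phi (v+s) else 0) + negF (v+s)) :=
    tsum_shift μ v _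
  have step4 : (∑' s : ℤ × ℤ, μ s * ((if 1 ≤ (v+s).2 then Phi (v+s) else 0) + negF (v+s)))
      = ENNReal.ofReal (eR a v) * ∑' s : ℤ × ℤ,
          μ s * ENNReal.ofReal (eR a s * w1v K v.2 s) := by
    rw [← ENNReal.tsum_mul_left]
    apply tsum_congr
    intro s
    rw [show (if 1 ≤ (v+s).2 then Phi (v+s) else 0) + negF (v+s)
        = ENNReal.ofReal (eR a v) * ENNReal.ofReal (eR a s * w1v K v.2 s) from
      comb_eq hK1 v hv2 s]
    ring
  have hy := hmain v.2 hv2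
  have step5 : (∑' s : ℤ × ℤ, μ s * ENNReal.ofReal (eR a s * w1v K v.2 s))
      ≤ ENNReal.ofReal (K - Real.exp (-(v.2:ℝ))) := by
    rw [ofReal_shift μ hμtop
      (fun s => mul_nonneg (eR_nonneg a s) (w1v_nonneg hK1 v.2 s)) hy.1]
    exact ENNReal.ofReal_le_ofReal hy.2
  calc (∑' w : ℤ × ℤ, (if w ∈ quadrant then μ (w - v) * Phi w else 0))
        + (∑' w : ℤ × ℤ, μ (w - v) * negF w)
      ≤ (∑' w : ℤ × ℤ, (if 1 ≤ w.2 then μ (w - v) * Phi w else 0))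
        + (∑' w : ℤ × ℤ, μ (w - v) * negF w) := add_le_add_left step1 _
    _ = ENNReal.ofReal (eR a v) * ∑' s : ℤ × ℤ,
          μ s * ENNReal.ofReal (eR a s * w1v K v.2 s) := by
        rw [step2, step3, step4]
    _ ≤ ENNReal.ofReal (eR a v) * ENNReal.ofReal (K - Real.exp (-(v.2:ℝ))) :=
        mul_le_mul_right step5 _
    _ = ENNReal.ofReal (eR a v * (K - Real.exp (-(v.2:ℝ)))) :=
        (ENNReal.ofReal_mul (eR_nonneg a v)).symm

end steps

section stepB
variable {μ : ℤ × ℤ → ℝ≥0∞} {a : ℝ × ℝ}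

noncomputable def ppv (y : ℤ) (s : ℤ × ℤ) : ℝ :=
  if 1 ≤ y + s.2 then ((y + s.2 : ℤ) : ℝ) else 0

noncomputable def pmv (y : ℤ) (s : ℤ × ℤ) : ℝ :=
  if y + s.2 ≤ 0 then -((y + s.2 : ℤ) : ℝ) else 0

lemma ppv_nonneg (y : ℤ) (s : ℤ × ℤ) : 0 ≤ ppv y s := by
  rw [ppv]
  by_cases h : 1 ≤ y + s.2
  · simp only [h, if_true]
    exact_mod_cast (by omega : (0:ℤ) ≤ y + s.2)
  · simp [h]

lemma pmv_nonneg (y : ℤ) (s : ℤ × ℤ) : 0 ≤ pmv y s := by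
  rw [pmv]
  by_cases h : y + s.2 ≤ 0
  · simp only [h, if_true, neg_nonneg]
    exact_mod_cast h
  · simp [h]

lemma ppv_le (y : ℤ) (hy : 1 ≤ y) (s : ℤ × ℤ) : ppv y s ≤ (y:ℝ) + |(s.2:ℝ)| := by
  have hy0 : (1:ℝ) ≤ (y:ℝ) := by exact_mod_cast hy
  rw [ppv]
  by_cases h : 1 ≤ y + s.2
  · simp only [h, if_true]
    push_cast
    cases abs_cases (s.2:ℝ) with
    | inl h' => linarith [h'.1]
    | inr h' => linarith [h'.1, abs_nonneg (s.2:ℝ)]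
  · simp only [h, if_false]
    positivity

lemma pmv_le (y : ℤ) (hy : 1 ≤ y) (s : ℤ × ℤ) : pmv y s ≤ (y:ℝ) + |(s.2:ℝ)| := by
  have hy0 : (1:ℝ) ≤ (y:ℝ) := by exact_mod_cast hy
  rw [pmv]
  by_cases h : y + s.2 ≤ 0
  · simp only [h, if_true]
    push_cast
    cases abs_cases (s.2:ℝ) with
    | inl h' => linarith [h'.1]
    | inr h' => linarith [h'.1]
  · simp only [h, if_false]
    positivity

lemma stepB (hμtop : ∀ s : ℤ × ℤ, μ s ≠ ⊤)
    (hone : ∑' s : ℤ × ℤ, (μ s).toReal * eR a s = 1)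
    (hc2 : ∑' s : ℤ × ℤ, (μ s).toReal * eR a s * (s.2 : ℝ) ≤ 0)
    (hsumb : ∀ b : ℝ × ℝ, Summable (fun s => (μ s).toReal * eR b s))
    (habs2 : Summable (fun s : ℤ × ℤ => (μ s).toReal * (eR a s * |(s.2:ℝ)|)))
    (v : ℤ × ℤ) (hv2 : 1 ≤ v.2) :
    (∑' w : ℤ × ℤ, μ (w - v) *
        (if 1 ≤ w.2 then ENNReal.ofReal ((w.2:ℝ) * eR a w) else 0))
      ≤ ENNReal.ofReal ((v.2:ℝ) * eR a v)
        + ∑' w : ℤ × ℤ, μ (w - v) *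
            (if w.2 ≤ 0 then ENNReal.ofReal (-(w.2:ℝ) * eR a w) else 0) := by
  classical
  have hy0 : (1:ℝ) ≤ (v.2:ℝ) := by exact_mod_cast hv2
  -- identification of shifted weights
  have hppF : ∀ s : ℤ × ℤ,
      (if 1 ≤ (v+s).2 then ENNReal.ofReal (((v+s).2:ℝ) * eR a (v+s)) else 0)
        = ENNReal.ofReal (eR a v) * ENNReal.ofReal (eR a s * ppv v.2 s) := by
    intro s
    rw [snd_add, ppv]
    by_cases h : 1 ≤ v.2 + s.2
    · rw [if_pos h, if_pos h, ← ENNReal.ofReal_mul (eR_nonneg a v)]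
      congr 1
      rw [eR_add]
      push_cast
      ring
    · rw [if_neg h, if_neg h]
      simp
  have hpmF : ∀ s : ℤ × ℤ,
      (if (v+s).2 ≤ 0 then ENNReal.ofReal (-((v+s).2:ℝ) * eR a (v+s)) else 0)
        = ENNReal.ofReal (eR a v) * ENNReal.ofReal (eR a s * pmv v.2 s) := by
    intro s
    rw [snd_add, pmv]
    by_cases h : v.2 + s.2 ≤ 0
    · rw [if_pos h, if_pos h, ← ENNReal.ofReal_mul (eR_nonneg a v)]
      congr 1
      rw [eR_add]
      push_cast
      ring
    · rw [if_neg h, if_neg h]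
      simp
  -- summabilities
  have hdomsum : Summable (fun s : ℤ × ℤ =>
      (μ s).toReal * (eR a s * ((v.2:ℝ) + |(s.2:ℝ)|))) := by
    apply Summable.congr (((hsumb a).mul_left (v.2:ℝ)).add habs2)
    intro s
    ring
  have hSp : Summable (fun s : ℤ × ℤ => (μ s).toReal * (eR a s * ppv v.2 s)) := by
    apply Summable.of_nonneg_of_le
      (fun s => mul_nonneg ENNReal.toReal_nonneg
        (mul_nonneg (eR_nonneg a s) (ppv_nonneg v.2 s)))
      (fun s => ?_) hdomsum
    exact mul_le_mul_of_nonneg_left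
      (mul_le_mul_of_nonneg_left (ppv_le v.2 hv2 s) (eR_nonneg a s))
      ENNReal.toReal_nonneg
  have hSm : Summable (fun s : ℤ × ℤ => (μ s).toReal * (eR a s * pmv v.2 s)) := by
    apply Summable.of_nonneg_of_le
      (fun s => mul_nonneg ENNReal.toReal_nonneg
        (mul_nonneg (eR_nonneg a s) (pmv_nonneg v.2 s)))
      (fun s => ?_) hdomsum
    exact mul_le_mul_of_nonneg_left
      (mul_le_mul_of_nonneg_left (pmv_le v.2 hv2 s) (eR_nonneg a s))
      ENNReal.toReal_nonneg
  have hsums2 : Summable (fun s : ℤ × ℤ => (μ s).toReal * eR a s * (s.2:ℝ)) := by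
    apply Summable.of_abs
    apply Summable.of_nonneg_of_le (fun s => abs_nonneg _) (fun s => ?_) habs2
    rw [abs_mul, abs_mul, abs_of_nonneg (ENNReal.toReal_nonneg),
      abs_of_nonneg (eR_nonneg a s), mul_assoc]
  have hlin : Summable (fun s : ℤ × ℤ =>
      (μ s).toReal * eR a s * ((v.2:ℝ) + (s.2:ℝ))) := by
    apply Summable.congr (((hsumb a).mul_left (v.2:ℝ)).add hsums2)
    intro s
    ring
  -- the real inequality Sp ≤ y + Sm
  have hdiff : ∀ s : ℤ × ℤ, (μ s).toReal * (eR a s * ppv v.2 s)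
      = (μ s).toReal * eR a s * ((v.2:ℝ) + (s.2:ℝ))
        + (μ s).toReal * (eR a s * pmv v.2 s) := by
    intro s
    rw [ppv, pmv]
    by_cases h : 1 ≤ v.2 + s.2
    · rw [if_pos h, if_neg (by omega)]
      push_cast
      ring
    · rw [if_neg h, if_pos (by omega)]
      push_cast
      ring
  have hSpSm : (∑' s : ℤ × ℤ, (μ s).toReal * (eR a s * ppv v.2 s))
      ≤ (v.2:ℝ) + ∑' s : ℤ × ℤ, (μ s).toReal * (eR a s * pmv v.2 s) := by
    have h1 : (∑' s : ℤ × ℤ, (μ s).toReal * (eR a s * ppv v.2 s))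
        = (∑' s : ℤ × ℤ, (μ s).toReal * eR a s * ((v.2:ℝ) + (s.2:ℝ)))
          + ∑' s : ℤ × ℤ, (μ s).toReal * (eR a s * pmv v.2 s) := by
      rw [← Summable.tsum_add hlin hSm]
      exact tsum_congr hdiff
    have h2 : (∑' s : ℤ × ℤ, (μ s).toReal * eR a s * ((v.2:ℝ) + (s.2:ℝ)))
        = (v.2:ℝ) * (∑' s : ℤ × ℤ, (μ s).toReal * eR a s)
          + ∑' s : ℤ × ℤ, (μ s).toReal * eR a s * (s.2:ℝ) := by
      rw [← tsum_mul_left, ← Summable.tsum_add ((hsumb a).mul_left (v.2:ℝ)) hsums2]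
      apply tsum_congr
      intro s
      ring
    rw [h1, h2, hone]
    linarith
  -- assembly in ℝ≥0∞
  have hL : (∑' w : ℤ × ℤ, μ (w - v) *
      (if 1 ≤ w.2 then ENNReal.ofReal ((w.2:ℝ) * eR a w) else 0))
      = ENNReal.ofReal (eR a v) * ENNReal.ofReal
          (∑' s : ℤ × ℤ, (μ s).toReal * (eR a s * ppv v.2 s)) := by
    rw [tsum_shift μ v (fun w => if 1 ≤ w.2 then ENNReal.ofReal ((w.2:ℝ) * eR a w) else 0)]
    rw [← ofReal_shift μ hμtop (fun s => mul_nonneg (eR_nonneg a s) (ppv_nonneg v.2 s)) hSp,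
      ← ENNReal.tsum_mul_left]
    apply tsum_congr
    intro s
    rw [hppF s]
    ring
  have hR : (∑' w : ℤ × ℤ, μ (w - v) *
      (if w.2 ≤ 0 then ENNReal.ofReal (-(w.2:ℝ) * eR a w) else 0))
      = ENNReal.ofReal (eR a v) * ENNReal.ofReal
          (∑' s : ℤ × ℤ, (μ s).toReal * (eR a s * pmv v.2 s)) := by
    rw [tsum_shift μ v (fun w => if w.2 ≤ 0 then ENNReal.ofReal (-(w.2:ℝ) * eR a w) else 0)]
    rw [← ofReal_shift μ hμtop (fun s => mul_nonneg (eR_nonneg a s) (pmv_nonneg v.2 s)) hSm,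
      ← ENNReal.tsum_mul_left]
    apply tsum_congr
    intro s
    rw [hpmF s]
    ring
  rw [hL, hR]
  have hposv : ENNReal.ofReal ((v.2:ℝ) * eR a v)
      = ENNReal.ofReal (eR a v) * ENNReal.ofReal ((v.2:ℝ)) := by
    rw [← ENNReal.ofReal_mul (eR_nonneg a v)]
    congr 1
    ring
  rw [hposv, ← mul_add, ← ENNReal.ofReal_add (by linarith)
    (tsum_nonneg (fun s => mul_nonneg ENNReal.toReal_nonneg
      (mul_nonneg (eR_nonneg a s) (pmv_nonneg v.2 s))))]
  exact mul_le_mul_right (ENNReal.ofReal_le_ofReal hSpSm) _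

end stepB

section mainaux

lemma main_aux (μ : ℤ × ℤ → ℝ≥0∞) (hprob : ∑' z : ℤ × ℤ, μ z = 1)
    (h3 : H3 μ) (a : ℝ × ℝ)
    (hone1 : jumpGF μ a = 1)
    (hgt : ∀ t : ℝ, t ≠ 0 → 1 < jumpGF μ (a + ((0:ℝ), t))) :
    ∀ z ∈ quadrant,
      Summable (fun w : ℤ × ℤ =>
        (exitK μ quadrant z w).toReal * |(w.2 : ℝ) * Real.exp (dot a (toR w))|) ∧
      0 ≤ (z.2 : ℝ) * Real.exp (dot a (toR z)) -
        EexitR μ quadrant z (fun w => (w.2 : ℝ) * Real.exp (dot a (toR w))) := by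
  classical
  intro z hz
  have hz2 : 0 < z.2 := hz.2
  have hμtop : ∀ s : ℤ × ℤ, μ s ≠ ⊤ := mu_ne_top hprob
  have hsumb : ∀ b : ℝ × ℝ, Summable (fun s : ℤ × ℤ => (μ s).toReal * eR b s) :=
    summable_jump hprob h3
  have honeR : ∑' s : ℤ × ℤ, (μ s).toReal * eR a s = 1 := by
    have h := tsum_jump hprob h3 a
    rw [hone1] at h
    simpa using h
  have hgtpsi : 1 < jumpGF μ (a - ((0:ℝ),(1:ℝ))) := by
    have h := hgt (-1) (by norm_num)
    have he : a + ((0:ℝ),(-1:ℝ)) = a - ((0:ℝ),(1:ℝ)) := by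
      apply Prod.ext
      · simp
      · show a.2 + -1 = a.2 - 1
        ring
    rwa [he] at h
  have hψR : 1 < ∑' s : ℤ × ℤ, (μ s).toReal * eR (a - ((0:ℝ),(1:ℝ))) s := by
    have h := ENNReal.toReal_strict_mono (h3 _).ne hgtpsi
    rw [ENNReal.toReal_one] at h
    rw [tsum_jump hprob h3]
    exact h
  have hgtR : ∀ t : ℝ, t ≠ 0 → t ≥ -1 →
      1 < ∑' s : ℤ × ℤ, (μ s).toReal * eR (a + ((0:ℝ),t)) s := by
    intro t ht _
    have h := ENNReal.toReal_strict_mono (h3 _).ne (hgt t ht)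
    rw [ENNReal.toReal_one] at h
    rw [tsum_jump hprob h3]
    exact h
  have hc2 : ∑' s : ℤ × ℤ, (μ s).toReal * eR a s * (s.2:ℝ) ≤ 0 :=
    c2_nonpos hsumb honeR hgtR
  obtain ⟨K, hK1, hmainK⟩ := mainr hsumb honeR hψR
  have hmain' : ∀ y : ℤ, 1 ≤ y →
      Summable (fun s : ℤ × ℤ => (μ s).toReal * (eR a s * w1v K y s)) ∧
      (∑' s : ℤ × ℤ, (μ s).toReal * (eR a s * w1v K y s)) ≤ K - Real.exp (-(y:ℝ)) :=
    fun y hy => hmainK y hy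
  have habs2 : Summable (fun s : ℤ × ℤ => (μ s).toReal * (eR a s * |(s.2:ℝ)|)) := by
    apply Summable.of_nonneg_of_le
      (fun s => mul_nonneg ENNReal.toReal_nonneg
        (mul_nonneg (eR_nonneg a s) (abs_nonneg _)))
      (fun s => ?_)
      (Summable.congr ((hsumb (a + ((0:ℝ),1))).add (hsumb (a + ((0:ℝ),-1))))
        (g := fun s : ℤ × ℤ => (μ s).toReal * (eR a s *
          (Real.exp ((s.2:ℝ)) + Real.exp (-(s.2:ℝ)))))
        (fun s => by rw [eR_vshift, eR_vshift]; ring))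
    have h1 : |(s.2:ℝ)| ≤ Real.exp ((s.2:ℝ)) + Real.exp (-(s.2:ℝ)) := by
      rcases abs_cases (s.2:ℝ) with ⟨h,_⟩ | ⟨h,_⟩ <;> rw [h]
      · linarith [self_le_exp (s.2:ℝ), Real.exp_pos (-(s.2:ℝ))]
      · linarith [self_le_exp (-(s.2:ℝ)), Real.exp_pos ((s.2:ℝ))]
    exact mul_le_mul_of_nonneg_left
      (mul_le_mul_of_nonneg_left h1 (eR_nonneg a s)) ENNReal.toReal_nonneg
  -- weight functions
  set posF : ℤ × ℤ → ℝ≥0∞ :=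
    fun w => if 1 ≤ w.2 then ENNReal.ofReal ((w.2:ℝ) * eR a w) else 0 with hposF
  set negF : ℤ × ℤ → ℝ≥0∞ :=
    fun w => if w.2 ≤ 0 then ENNReal.ofReal (-(w.2:ℝ) * eR a w) else 0 with hnegF
  set Phi : ℤ × ℤ → ℝ≥0∞ :=
    fun w => ENNReal.ofReal (eR a w * (K - Real.exp (-(w.2:ℝ)))) with hPhi
  set SM : ℕ → ℝ≥0∞ :=
    fun n => ∑' v : ℤ × ℤ, nstepK μ quadrant n z v * Phi v with hSM
  set SS : ℕ → ℝ≥0∞ :=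
    fun n => ∑' v : ℤ × ℤ, nstepK μ quadrant n z v *
      (∑' w : ℤ × ℤ, μ (w - v) * negF w) with hSS
  set MM : ℕ → ℝ≥0∞ :=
    fun n => ∑' v : ℤ × ℤ, nstepK μ quadrant n z v * posF v with hMM
  set EW : ℕ → ℝ≥0∞ :=
    fun n => ∑' v : ℤ × ℤ, nstepK μ quadrant n z v *
      (∑' w : ℤ × ℤ, (if w ∈ quadrant then 0 else μ (w - v) * posF w)) with hEW
  -- supermartingale recursion for Phi
  have ha1 : ∀ n : ℕ, SM (n+1) + SS n ≤ SM n := by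
    intro n
    rw [hSM, hSS]
    simp only
    rw [nstepK_succ_mul μ quadrant z n Phi, ← ENNReal.tsum_add]
    apply ENNReal.tsum_le_tsum
    intro v
    by_cases hv : v ∈ quadrant
    · rw [← mul_add]
      exact mul_le_mul_right (stepA hμtop hK1 hmain' v hv.2) _
    · rw [nstepK_zero_of_not_mem μ hz hv n]
      simp
  have key1 : ∀ n : ℕ, (∑ k ∈ Finset.range n, SS k) + SM n ≤ SM 0 := by
    intro n
    induction n with
    | zero => simp
    | succ n ih =>
        rw [Finset.sum_range_succ]
        calc (∑ k ∈ Finset.range n, SS k) + SS n + SM (n+1)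
            = (∑ k ∈ Finset.range n, SS k) + (SM (n+1) + SS n) := by ring
          _ ≤ (∑ k ∈ Finset.range n, SS k) + SM n := add_le_add_right (ha1 n) _
          _ ≤ SM 0 := ih
  have hSM0 : SM 0 = Phi z := nstepK_zero_mul μ quadrant z Phi
  have hSStsum : (∑' n : ℕ, SS n) ≤ Phi z := by
    apply tsum_nat_le_of_partial
    intro n
    calc ∑ k ∈ Finset.range n, SS k
        ≤ (∑ k ∈ Finset.range n, SS k) + SM n := le_self_add
      _ ≤ SM 0 := key1 n
      _ = Phi z := hSM0
  -- superharmonic recursion for posF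
  have ha2 : ∀ n : ℕ, MM (n+1) + EW n ≤ MM n + SS n := by
    intro n
    rw [hMM, hEW, hSS]
    simp only
    rw [nstepK_succ_mul μ quadrant z n posF, ← ENNReal.tsum_add, ← ENNReal.tsum_add]
    apply ENNReal.tsum_le_tsum
    intro v
    by_cases hv : v ∈ quadrant
    · rw [← mul_add, ← mul_add]
      apply mul_le_mul_right
      have hmerge : (∑' w : ℤ × ℤ, (if w ∈ quadrant then μ (w - v) * posF w else 0))
          + (∑' w : ℤ × ℤ, (if w ∈ quadrant then 0 else μ (w - v) * posF w))
          = ∑' w : ℤ × ℤ, μ (w - v) * posF w := by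
        rw [← ENNReal.tsum_add]
        apply tsum_congr
        intro w
        by_cases hw : w ∈ quadrant <;> simp [hw]
      have hv2 : 1 ≤ v.2 := hv.2
      have hposv : posF v = ENNReal.ofReal ((v.2:ℝ) * eR a v) := by
        rw [hposF]
        simp only
        rw [if_pos hv2]
      rw [hmerge, hposv]
      exact stepB hμtop honeR hc2 hsumb habs2 v hv2
    · rw [nstepK_zero_of_not_mem μ hz hv n]
      simp
  have key2 : ∀ n : ℕ, MM n + (∑ k ∈ Finset.range n, EW k)
      ≤ MM 0 + ∑ k ∈ Finset.range n, SS k := by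
    intro n
    induction n with
    | zero => simp
    | succ n ih =>
        rw [Finset.sum_range_succ, Finset.sum_range_succ]
        calc MM (n+1) + ((∑ k ∈ Finset.range n, EW k) + EW n)
            = (MM (n+1) + EW n) + ∑ k ∈ Finset.range n, EW k := by ring
          _ ≤ (MM n + SS n) + ∑ k ∈ Finset.range n, EW k := add_le_add_left (ha2 n) _
          _ = (MM n + ∑ k ∈ Finset.range n, EW k) + SS n := by ring
          _ ≤ (MM 0 + ∑ k ∈ Finset.range n, SS k) + SS n := add_le_add_left ih _
          _ = MM 0 + ((∑ k ∈ Finset.range n, SS k) + SS n) := by ring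
  have hMM0 : MM 0 = posF z := nstepK_zero_mul μ quadrant z posF
  have hEWtsum : (∑' n : ℕ, EW n) ≤ posF z + ∑' n : ℕ, SS n := by
    apply tsum_nat_le_of_partial
    intro n
    calc ∑ k ∈ Finset.range n, EW k ≤ MM n + ∑ k ∈ Finset.range n, EW k := le_add_self
      _ ≤ MM 0 + ∑ k ∈ Finset.range n, SS k := key2 n
      _ ≤ posF z + ∑' k : ℕ, SS k := by
          rw [hMM0]
          exact add_le_add_right (ENNReal.sum_le_tsum _) _
  -- aggregation via exitK
  have hTSeq : (∑' w : ℤ × ℤ, exitK μ quadrant z w * negF w) = ∑' n : ℕ, SS n := by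
    rw [exitK_mul μ quadrant z negF, hSS]
    apply tsum_congr; intro n
    apply tsum_congr; intro v
    congr 1
    apply tsum_congr; intro w
    by_cases hw : w ∈ quadrant
    · have hw0 : negF w = 0 := by
        rw [hnegF]
        simp only
        rw [if_neg (by have := hw.2; omega)]
      simp [hw, hw0]
    · simp [hw]
  have hTWeq : (∑' w : ℤ × ℤ, exitK μ quadrant z w * posF w) = ∑' n : ℕ, EW n := by
    rw [exitK_mul μ quadrant z posF, hEW]
  set TS := ∑' w : ℤ × ℤ, exitK μ quadrant z w * negF w with hTS
  set TW := ∑' w : ℤ × ℤ, exitK μ quadrant z w * posF w with hTW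
  have hTSle : TS ≤ Phi z := by rw [hTSeq]; exact hSStsum
  have hTWle : TW ≤ posF z + TS := by
    rw [hTWeq, hTSeq]
    exact hEWtsum
  have hposFz : posF z = ENNReal.ofReal ((z.2:ℝ) * eR a z) := by
    rw [hposF]
    simp only
    rw [if_pos (by omega)]
  have hTSne : TS ≠ ⊤ := (hTSle.trans_lt ENNReal.ofReal_lt_top).ne
  have hTWne : TW ≠ ⊤ := by
    refine (hTWle.trans_lt ?_).ne
    rw [hposFz]
    exact ENNReal.add_lt_top.mpr ⟨ENNReal.ofReal_lt_top, hTSne.lt_top⟩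
  -- real conversions
  have hTW' : (∑' w : ℤ × ℤ, exitK μ quadrant z w * posF w) ≠ ⊤ := by
    rw [← hTW]; exact hTWne
  have hTS' : (∑' w : ℤ × ℤ, exitK μ quadrant z w * negF w) ≠ ⊤ := by
    rw [← hTS]; exact hTSne
  have hsumW : Summable (fun w : ℤ × ℤ => (exitK μ quadrant z w * posF w).toReal) :=
    ENNReal.summable_toReal hTW'
  have hsumS : Summable (fun w : ℤ × ℤ => (exitK μ quadrant z w * negF w).toReal) :=
    ENNReal.summable_toReal hTS'
  have habs_eq : ∀ w : ℤ × ℤ, (exitK μ quadrant z w).toReal * |(w.2 : ℝ) * eR a w|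
      = (exitK μ quadrant z w * posF w).toReal + (exitK μ quadrant z w * negF w).toReal := by
    intro w
    rw [ENNReal.toReal_mul, ENNReal.toReal_mul, hposF, hnegF]
    simp only
    by_cases h : 1 ≤ w.2
    · have h2 : (0:ℝ) ≤ (w.2:ℝ) := by exact_mod_cast (by omega : (0:ℤ) ≤ w.2)
      rw [if_pos h, if_neg (by omega), ENNReal.toReal_ofReal
        (mul_nonneg h2 (eR_nonneg a w))]
      rw [abs_of_nonneg (mul_nonneg h2 (eR_nonneg a w))]
      simp
    · have h0 : w.2 ≤ 0 := by omega
      have h2 : (w.2:ℝ) ≤ 0 := by exact_mod_cast h0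
      rw [if_neg h, if_pos h0, ENNReal.toReal_ofReal
        (mul_nonneg (by linarith) (eR_nonneg a w))]
      rw [abs_of_nonpos (mul_nonpos_of_nonpos_of_nonneg h2 (eR_nonneg a w))]
      simp
  have hgoal1 : Summable (fun w : ℤ × ℤ =>
      (exitK μ quadrant z w).toReal * |(w.2 : ℝ) * eR a w|) :=
    (hsumW.add hsumS).congr (fun w => (habs_eq w).symm)
  -- EexitR identity
  have hsigned : ∀ w : ℤ × ℤ, (exitK μ quadrant z w).toReal * ((w.2 : ℝ) * eR a w)
      = (exitK μ quadrant z w * posF w).toReal - (exitK μ quadrant z w * negF w).toReal := by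
    intro w
    rw [ENNReal.toReal_mul, ENNReal.toReal_mul, hposF, hnegF]
    simp only
    by_cases h : 1 ≤ w.2
    · have h2 : (0:ℝ) ≤ (w.2:ℝ) := by exact_mod_cast (by omega : (0:ℤ) ≤ w.2)
      rw [if_pos h, if_neg (by omega), ENNReal.toReal_ofReal
        (mul_nonneg h2 (eR_nonneg a w))]
      simp
    · have h0 : w.2 ≤ 0 := by omega
      have h2 : (w.2:ℝ) ≤ 0 := by exact_mod_cast h0
      rw [if_neg h, if_pos h0, ENNReal.toReal_ofReal
        (mul_nonneg (by linarith) (eR_nonneg a w))]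
      simp
  have htermWne : ∀ w : ℤ × ℤ, exitK μ quadrant z w * posF w ≠ ⊤ := by
    intro w
    exact ((ENNReal.le_tsum w).trans_lt hTW'.lt_top).ne
  have htermSne : ∀ w : ℤ × ℤ, exitK μ quadrant z w * negF w ≠ ⊤ := by
    intro w
    exact ((ENNReal.le_tsum w).trans_lt hTS'.lt_top).ne
  have hEexit : EexitR μ quadrant z (fun w => (w.2 : ℝ) * eR a w)
      = TW.toReal - TS.toReal := by
    rw [EexitR]
    rw [show (∑' w : ℤ × ℤ, (exitK μ quadrant z w).toReal * ((w.2 : ℝ) * eR a w))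
        = ∑' w : ℤ × ℤ, ((exitK μ quadrant z w * posF w).toReal
            - (exitK μ quadrant z w * negF w).toReal) from tsum_congr hsigned]
    rw [Summable.tsum_sub hsumW hsumS]
    rw [hTW, hTS, ENNReal.tsum_toReal_eq htermWne, ENNReal.tsum_toReal_eq htermSne]
  have hfinal : TW.toReal - TS.toReal ≤ (z.2:ℝ) * eR a z := by
    have h1 : TW.toReal ≤ (ENNReal.ofReal ((z.2:ℝ) * eR a z) + TS).toReal := by
      apply ENNReal.toReal_mono
      · exact ENNReal.add_ne_top.mpr ⟨ENNReal.ofReal_ne_top, hTSne⟩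
      · rw [← hposFz]; exact hTWle
    rw [ENNReal.toReal_add ENNReal.ofReal_ne_top hTSne, ENNReal.toReal_ofReal
      (mul_nonneg (by exact_mod_cast hz2.le) (eR_nonneg a z))] at h1
    linarith
  refine ⟨hgoal1, ?_⟩
  rw [show EexitR μ quadrant z (fun w => (w.2 : ℝ) * Real.exp (dot a (toR w)))
      = EexitR μ quadrant z (fun w => (w.2 : ℝ) * eR a w) from rfl, hEexit]
  show 0 ≤ (z.2:ℝ) * eR a z - (TW.toReal - TS.toReal)
  linarith

end mainaux

end L42

/-- **Lemma 4.2.**  Under (H1) and (H3), the function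
`z = (x₁,x₂) ↦ x₂ exp(a(1,0)·z) − E_z(S₂(τ) exp(a(1,0)·S(τ)); τ < ∞)` is well defined
(the expectation converges absolutely) and nonnegative on `ℕ*×ℕ*`. -/
theorem h_a10_well_defined_nonneg
    (μ : ℤ × ℤ → ℝ≥0∞) (hprob : ∑' z : ℤ × ℤ, μ z = 1)
    (h1 : H1 μ) (h3 : H3 μ)
    (aOf : ℝ × ℝ → ℝ × ℝ) (haOf : IsDirMap μ aOf) :
    ∀ z ∈ quadrant,
      Summable (fun w : ℤ × ℤ =>
        (exitK μ quadrant z w).toReal *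
          |(w.2 : ℝ) * Real.exp (dot (aOf ((1 : ℝ), (0 : ℝ))) (toR w))|) ∧
      0 ≤ (z.2 : ℝ) * Real.exp (dot (aOf ((1 : ℝ), (0 : ℝ))) (toR z)) -
        EexitR μ quadrant z
          (fun w => (w.2 : ℝ) * Real.exp (dot (aOf ((1 : ℝ), (0 : ℝ))) (toR w))) := by
  classical
  have h10 : ((1:ℝ),(0:ℝ)) ≠ (0 : ℝ × ℝ) := by
    intro h
    rw [Prod.ext_iff] at h
    norm_num at h
  obtain ⟨hone1, hstrict⟩ := haOf ((1:ℝ),(0:ℝ)) h10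
  set a := aOf ((1:ℝ),(0:ℝ)) with ha
  have hgt : ∀ t : ℝ, t ≠ 0 → 1 < jumpGF μ (a + ((0:ℝ), t)) := by
    intro t ht
    by_contra hle
    push_neg at hle
    have hne : a + ((0:ℝ), t) ≠ a := by
      intro h
      have h2 := congrArg Prod.snd h
      simp only [Prod.snd_add] at h2
      have : t = 0 := by
        have : a.2 + t = a.2 := h2
        linarith
      exact ht this
    have hlt := hstrict (a + ((0:ℝ), t)) hle hne
    rw [dot, dot] at hlt
    simp only [Prod.fst_add, Prod.snd_add] at hlt
    norm_num at hlt
  exact L42.main_aux μ hprob h3 a hone1 hgt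

end KRWQ
end

section
/- Under hypothesis (H2), the killed random walk (Z₊(t)) satisfies the communication condition on the whole space ℕ*×ℕ*: there exist θ > 0 and C > 0 such that for any z ≠ z' in ℕ*×ℕ* there is a sequence of points z₀, z₁, ..., zₙ ∈ ℕ*×ℕ* with z₀ = z, zₙ = z' and n ≤ C|z'−z|, such that |zᵢ − zᵢ₋₁| ≤ C and P_{zᵢ₋₁}(Z₊(1) = zᵢ) ≥ θ for all i = 1, ..., n. -/
open scoped ENNReal Classical
open Filter

namespace KRWQ

lemma nstepK_one (μ : ℤ × ℤ → ℝ≥0∞) (u v : ℤ × ℤ) :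
    nstepK μ quadrant 1 u v = if v ∈ quadrant then μ (v - u) else 0 := by
  show quadrant.indicator (fun w => ∑' x : ℤ × ℤ, nstepK μ quadrant 0 u x * μ (w - x)) v = _
  by_cases hv : v ∈ quadrant
  · rw [Set.indicator_of_mem hv, if_pos hv]
    rw [tsum_eq_single u]
    · simp [nstepK]
    · intro b hb
      simp [nstepK, hb]
  · rw [Set.indicator_of_notMem hv, if_neg hv]

lemma normZ_nonneg (z : ℤ × ℤ) : 0 ≤ normZ z := Real.sqrt_nonneg _

def GoodPath (μ : ℤ × ℤ → ℝ≥0∞) (θ : ℝ≥0∞) (C : ℝ) (z z' : ℤ × ℤ) (n : ℕ) : Prop :=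
  ∃ p : ℕ → ℤ × ℤ, p 0 = z ∧ p n = z' ∧
    ∀ i : ℕ, 1 ≤ i → i ≤ n →
      p i ∈ quadrant ∧ normZ (p i - p (i - 1)) ≤ C ∧ θ ≤ μ (p i - p (i - 1))

lemma GoodPath.refl (μ : ℤ × ℤ → ℝ≥0∞) (θ : ℝ≥0∞) (C : ℝ) (z : ℤ × ℤ) :
    GoodPath μ θ C z z 0 :=
  ⟨fun _ => z, rfl, rfl, fun i h1 h2 => absurd (h1.trans h2) (by omega)⟩

lemma GoodPath.mono {μ : ℤ × ℤ → ℝ≥0∞} {θ θ' : ℝ≥0∞} {C C' : ℝ} {z z' : ℤ × ℤ} {n : ℕ}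
    (hθ : θ' ≤ θ) (hC : C ≤ C') (h : GoodPath μ θ C z z' n) : GoodPath μ θ' C' z z' n := by
  obtain ⟨p, h0, hn, hp⟩ := h
  exact ⟨p, h0, hn, fun i h1 h2 =>
    ⟨(hp i h1 h2).1, (hp i h1 h2).2.1.trans hC, hθ.trans (hp i h1 h2).2.2⟩⟩

lemma GoodPath.trans {μ : ℤ × ℤ → ℝ≥0∞} {θ : ℝ≥0∞} {C : ℝ} {z z' z'' : ℤ × ℤ} {n m : ℕ}
    (h1 : GoodPath μ θ C z z' n) (h2 : GoodPath μ θ C z' z'' m) :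
    GoodPath μ θ C z z'' (n + m) := by
  obtain ⟨p, hp0, hpn, hp⟩ := h1
  obtain ⟨q, hq0, hqm, hq⟩ := h2
  refine ⟨fun i => if i ≤ n then p i else q (i - n), ?_, ?_, ?_⟩
  · simp [hp0]
  · by_cases hm : m = 0
    · subst hm
      simp [hpn, ← hq0, hqm]
    · show (if n + m ≤ n then p (n+m) else q (n + m - n)) = z''
      rw [if_neg (by omega)]
      simpa using hqm
  · intro i h1i hin
    by_cases hi : i ≤ n
    · have hi1 : i - 1 ≤ n := le_trans (Nat.sub_le i 1) hi
      simp only [if_pos hi, if_pos hi1]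
      exact hp i h1i hi
    · push_neg at hi
      have h1' : 1 ≤ i - n := by omega
      have h2' : i - n ≤ m := by omega
      have h' := hq (i - n) h1' h2'
      beta_reduce
      rw [if_neg (by omega)]
      by_cases hi1 : i - 1 ≤ n
      · have e1 : i - 1 = n := by omega
        have e2 : i - n = 1 := by omega
        rw [if_pos hi1, e1, hpn, ← hq0, e2]
        simpa [e2] using h'
      · rw [if_neg hi1]
        have e3 : i - 1 - n = i - n - 1 := by omega
        rw [e3]
        exact h'

lemma GoodPath.translate {μ : ℤ × ℤ → ℝ≥0∞} {θ : ℝ≥0∞} {C : ℝ} {z z' : ℤ × ℤ} {n : ℕ}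
    (s : ℤ × ℤ) (hs1 : 0 ≤ s.1) (hs2 : 0 ≤ s.2)
    (h : GoodPath μ θ C z z' n) : GoodPath μ θ C (z + s) (z' + s) n := by
  obtain ⟨p, hp0, hpn, hp⟩ := h
  refine ⟨fun i => p i + s, by beta_reduce; rw [hp0], by beta_reduce; rw [hpn], ?_⟩
  intro i hi1 hi2
  obtain ⟨hqd, hnrm, hmu⟩ := hp i hi1 hi2
  have hd : p i + s - (p (i - 1) + s) = p i - p (i - 1) := by abel
  refine ⟨⟨?_, ?_⟩, ?_, ?_⟩
  · have := hqd.1; simp only [Prod.fst_add]; omega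
  · have := hqd.2; simp only [Prod.snd_add]; omega
  · rw [hd]; exact hnrm
  · rw [hd]; exact hmu

lemma exists_path_of_nstepK_pos (μ : ℤ × ℤ → ℝ≥0∞) :
    ∀ n : ℕ, ∀ z z' : ℤ × ℤ, 0 < nstepK μ quadrant n z z' →
      ∃ p : ℕ → ℤ × ℤ, p 0 = z ∧ p n = z' ∧
        ∀ i : ℕ, 1 ≤ i → i ≤ n → p i ∈ quadrant ∧ 0 < μ (p i - p (i - 1)) := by
  intro n
  induction n with
  | zero =>
      intro z z' h
      have hz : z' = z := by
        by_contra hne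
        simp [nstepK, hne] at h
      exact ⟨fun _ => z, rfl, by simp [hz], fun i h1 h2 => absurd (h1.trans h2) (by omega)⟩
  | succ n ih =>
      intro z z' h
      have hdef : nstepK μ quadrant (n + 1) z z'
          = quadrant.indicator
              (fun u => ∑' w : ℤ × ℤ, nstepK μ quadrant n z w * μ (u - w)) z' := rfl
      rw [hdef] at h
      by_cases hz' : z' ∈ quadrant
      swap
      · rw [Set.indicator_of_notMem hz'] at h
        exact absurd h (lt_irrefl 0)
      rw [Set.indicator_of_mem hz'] at h
      have hex : ∃ w : ℤ × ℤ, 0 < nstepK μ quadrant n z w * μ (z' - w) := by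
        by_contra hc
        push_neg at hc
        have hall : ∀ w, nstepK μ quadrant n z w * μ (z' - w) = 0 :=
          fun w => le_antisymm (hc w) (zero_le)
        rw [ENNReal.tsum_eq_zero.mpr hall] at h
        exact lt_irrefl 0 h
      obtain ⟨w, hw⟩ := hex
      have hw0 : nstepK μ quadrant n z w * μ (z' - w) ≠ 0 := hw.ne'
      rw [mul_ne_zero_iff] at hw0
      have hw1 : 0 < nstepK μ quadrant n z w := pos_iff_ne_zero.mpr hw0.1
      have hw2 : 0 < μ (z' - w) := pos_iff_ne_zero.mpr hw0.2
      obtain ⟨p, hp0, hpn, hp⟩ := ih z w hw1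
      refine ⟨fun i => if i ≤ n then p i else z', by simp [hp0],
        by beta_reduce; rw [if_neg (by omega)], ?_⟩
      intro i hi1 hi2
      by_cases hi : i ≤ n
      · have hi1' : i - 1 ≤ n := le_trans (Nat.sub_le i 1) hi
        simp only [if_pos hi, if_pos hi1']
        exact hp i hi1 hi
      · have e1 : i = n + 1 := by omega
        have e2 : i - 1 = n := by omega
        beta_reduce
        rw [if_neg hi, e2, if_pos (le_refl n), hpn]
        exact ⟨hz', hw2⟩

lemma goodpath_of_nstepK_pos {μ : ℤ × ℤ → ℝ≥0∞} {n : ℕ} {z z' : ℤ × ℤ}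
    (h : 0 < nstepK μ quadrant n z z') :
    ∃ θ : ℝ≥0∞, 0 < θ ∧ ∃ C : ℝ, 0 ≤ C ∧ GoodPath μ θ C z z' n := by
  obtain ⟨p, hp0, hpn, hp⟩ := exists_path_of_nstepK_pos μ n z z' h
  refine ⟨(Finset.range n).inf (fun j => μ (p (j + 1) - p j)), ?_,
    ∑ j ∈ Finset.range n, normZ (p (j + 1) - p j), ?_, ?_⟩
  · rw [Finset.lt_inf_iff (by simp : (0 : ℝ≥0∞) < ⊤)]
    intro j hj
    rw [Finset.mem_range] at hj
    have := (hp (j + 1) (by omega) (by omega)).2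
    simpa using this
  · exact Finset.sum_nonneg fun j _ => normZ_nonneg _
  · refine ⟨p, hp0, hpn, fun i hi1 hi2 => ?_⟩
    have hmem : i - 1 ∈ Finset.range n := by simp; omega
    have e : i - 1 + 1 = i := by omega
    refine ⟨(hp i hi1 hi2).1, ?_, ?_⟩
    · have := Finset.single_le_sum (f := fun j => normZ (p (j + 1) - p j))
        (fun j _ => normZ_nonneg _) hmem
      simpa only [e] using this
    · have := Finset.inf_le (f := fun j => μ (p (j + 1) - p j)) hmem
      simpa only [e] using this

section Moves

variable {μ : ℤ × ℤ → ℝ≥0∞} {θ : ℝ≥0∞} {C : ℝ} {nE nW nN nS : ℕ}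

lemma stepE (hE : GoodPath μ θ C ((1 : ℤ), (1 : ℤ)) ((2 : ℤ), (1 : ℤ)) nE)
    (a b : ℤ) (ha : 0 < a) (hb : 0 < b) : GoodPath μ θ C (a, b) (a + 1, b) nE := by
  have h := hE.translate (a - 1, b - 1) (show (0:ℤ) ≤ a - 1 by omega)
    (show (0:ℤ) ≤ b - 1 by omega)
  have e1 : ((1 : ℤ), (1 : ℤ)) + (a - 1, b - 1) = (a, b) := by
    simp only [Prod.mk_add_mk, Prod.mk.injEq]; omega
  have e2 : ((2 : ℤ), (1 : ℤ)) + (a - 1, b - 1) = (a + 1, b) := by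
    simp only [Prod.mk_add_mk, Prod.mk.injEq]; omega
  rwa [e1, e2] at h

lemma stepW (hW : GoodPath μ θ C ((2 : ℤ), (1 : ℤ)) ((1 : ℤ), (1 : ℤ)) nW)
    (a b : ℤ) (ha : 0 < a) (hb : 0 < b) : GoodPath μ θ C (a + 1, b) (a, b) nW := by
  have h := hW.translate (a - 1, b - 1) (show (0:ℤ) ≤ a - 1 by omega)
    (show (0:ℤ) ≤ b - 1 by omega)
  have e1 : ((2 : ℤ), (1 : ℤ)) + (a - 1, b - 1) = (a + 1, b) := by
    simp only [Prod.mk_add_mk, Prod.mk.injEq]; omega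
  have e2 : ((1 : ℤ), (1 : ℤ)) + (a - 1, b - 1) = (a, b) := by
    simp only [Prod.mk_add_mk, Prod.mk.injEq]; omega
  rwa [e1, e2] at h

lemma stepN (hN : GoodPath μ θ C ((1 : ℤ), (1 : ℤ)) ((1 : ℤ), (2 : ℤ)) nN)
    (a b : ℤ) (ha : 0 < a) (hb : 0 < b) : GoodPath μ θ C (a, b) (a, b + 1) nN := by
  have h := hN.translate (a - 1, b - 1) (show (0:ℤ) ≤ a - 1 by omega)
    (show (0:ℤ) ≤ b - 1 by omega)
  have e1 : ((1 : ℤ), (1 : ℤ)) + (a - 1, b - 1) = (a, b) := by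
    simp only [Prod.mk_add_mk, Prod.mk.injEq]; omega
  have e2 : ((1 : ℤ), (2 : ℤ)) + (a - 1, b - 1) = (a, b + 1) := by
    simp only [Prod.mk_add_mk, Prod.mk.injEq]; omega
  rwa [e1, e2] at h

lemma stepS (hS : GoodPath μ θ C ((1 : ℤ), (2 : ℤ)) ((1 : ℤ), (1 : ℤ)) nS)
    (a b : ℤ) (ha : 0 < a) (hb : 0 < b) : GoodPath μ θ C (a, b + 1) (a, b) nS := by
  have h := hS.translate (a - 1, b - 1) (show (0:ℤ) ≤ a - 1 by omega)
    (show (0:ℤ) ≤ b - 1 by omega)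
  have e1 : ((1 : ℤ), (2 : ℤ)) + (a - 1, b - 1) = (a, b + 1) := by
    simp only [Prod.mk_add_mk, Prod.mk.injEq]; omega
  have e2 : ((1 : ℤ), (1 : ℤ)) + (a - 1, b - 1) = (a, b) := by
    simp only [Prod.mk_add_mk, Prod.mk.injEq]; omega
  rwa [e1, e2] at h

lemma moveE (hE : GoodPath μ θ C ((1 : ℤ), (1 : ℤ)) ((2 : ℤ), (1 : ℤ)) nE) :
    ∀ k : ℕ, ∀ a b : ℤ, 0 < a → 0 < b → GoodPath μ θ C (a, b) (a + k, b) (k * nE) := by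
  intro k
  induction k with
  | zero => intro a b ha hb; simpa using GoodPath.refl μ θ C (a, b)
  | succ k ih =>
      intro a b ha hb
      have h1 := ih a b ha hb
      have h2 := stepE hE (a + k) b (by omega) hb
      have h3 := h1.trans h2
      have e1 : a + (k : ℤ) + 1 = a + ((k : ℕ) + 1 : ℕ) := by push_cast; ring
      have e2 : k * nE + nE = (k + 1) * nE := by ring
      rwa [e1, e2] at h3

lemma moveW (hW : GoodPath μ θ C ((2 : ℤ), (1 : ℤ)) ((1 : ℤ), (1 : ℤ)) nW) :
    ∀ k : ℕ, ∀ a b : ℤ, 0 < a → 0 < b → GoodPath μ θ C (a + k, b) (a, b) (k * nW) := by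
  intro k
  induction k with
  | zero => intro a b ha hb; simpa using GoodPath.refl μ θ C (a, b)
  | succ k ih =>
      intro a b ha hb
      have h1 := stepW hW (a + k) b (by omega) hb
      have h2 := ih a b ha hb
      have h3 := h1.trans h2
      have e1 : a + (k : ℤ) + 1 = a + ((k : ℕ) + 1 : ℕ) := by push_cast; ring
      have e2 : nW + k * nW = (k + 1) * nW := by ring
      rwa [e1, e2] at h3

lemma moveN (hN : GoodPath μ θ C ((1 : ℤ), (1 : ℤ)) ((1 : ℤ), (2 : ℤ)) nN) :
    ∀ k : ℕ, ∀ a b : ℤ, 0 < a → 0 < b → GoodPath μ θ C (a, b) (a, b + k) (k * nN) := by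
  intro k
  induction k with
  | zero => intro a b ha hb; simpa using GoodPath.refl μ θ C (a, b)
  | succ k ih =>
      intro a b ha hb
      have h1 := ih a b ha hb
      have h2 := stepN hN a (b + k) ha (by omega)
      have h3 := h1.trans h2
      have e1 : b + (k : ℤ) + 1 = b + ((k : ℕ) + 1 : ℕ) := by push_cast; ring
      have e2 : k * nN + nN = (k + 1) * nN := by ring
      rwa [e1, e2] at h3

lemma moveS (hS : GoodPath μ θ C ((1 : ℤ), (2 : ℤ)) ((1 : ℤ), (1 : ℤ)) nS) :
    ∀ k : ℕ, ∀ a b : ℤ, 0 < a → 0 < b → GoodPath μ θ C (a, b + k) (a, b) (k * nS) := by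
  intro k
  induction k with
  | zero => intro a b ha hb; simpa using GoodPath.refl μ θ C (a, b)
  | succ k ih =>
      intro a b ha hb
      have h1 := stepS hS a (b + k) ha (by omega)
      have h2 := ih a b ha hb
      have h3 := h1.trans h2
      have e1 : b + (k : ℤ) + 1 = b + ((k : ℕ) + 1 : ℕ) := by push_cast; ring
      have e2 : nS + k * nS = (k + 1) * nS := by ring
      rwa [e1, e2] at h3

lemma key (hE : GoodPath μ θ C ((1 : ℤ), (1 : ℤ)) ((2 : ℤ), (1 : ℤ)) nE)
    (hW : GoodPath μ θ C ((2 : ℤ), (1 : ℤ)) ((1 : ℤ), (1 : ℤ)) nW)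
    (hN : GoodPath μ θ C ((1 : ℤ), (1 : ℤ)) ((1 : ℤ), (2 : ℤ)) nN)
    (hS : GoodPath μ θ C ((1 : ℤ), (2 : ℤ)) ((1 : ℤ), (1 : ℤ)) nS) :
    ∀ z ∈ quadrant, ∀ z' ∈ quadrant, ∃ n : ℕ, GoodPath μ θ C z z' n ∧
      n ≤ ((z'.1 - z.1).natAbs + (z'.2 - z.2).natAbs) * max (max nE nW) (max nN nS) := by
  intro z hz z' hz'
  set N := max (max nE nW) (max nN nS) with hN'
  have hzq : 0 < z.1 ∧ 0 < z.2 := hz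
  have hzq' : 0 < z'.1 ∧ 0 < z'.2 := hz'
  set kx := (z'.1 - z.1).natAbs with hkx
  set ky := (z'.2 - z.2).natAbs with hky
  have phase1 : ∃ n1 : ℕ, GoodPath μ θ C z (z'.1, z.2) n1 ∧ n1 ≤ kx * N := by
    rcases le_total z.1 z'.1 with h | h
    · have hm := moveE hE kx z.1 z.2 hzq.1 hzq.2
      have e1 : z.1 + (kx : ℤ) = z'.1 := by omega
      have e0 : (z.1, z.2) = z := rfl
      rw [e1, e0] at hm
      exact ⟨kx * nE, hm, Nat.mul_le_mul_left kx (le_trans (le_max_left _ _) (le_max_left _ _))⟩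
    · have hm := moveW hW kx z'.1 z.2 hzq'.1 hzq.2
      have e1 : z'.1 + (kx : ℤ) = z.1 := by omega
      rw [e1] at hm
      have e0 : (z.1, z.2) = z := rfl
      rw [e0] at hm
      exact ⟨kx * nW, hm, Nat.mul_le_mul_left kx (le_trans (le_max_right _ _) (le_max_left _ _))⟩
  have phase2 : ∃ n2 : ℕ, GoodPath μ θ C (z'.1, z.2) z' n2 ∧ n2 ≤ ky * N := by
    rcases le_total z.2 z'.2 with h | h
    · have hm := moveN hN ky z'.1 z.2 hzq'.1 hzq.2
      have e1 : z.2 + (ky : ℤ) = z'.2 := by omega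
      rw [e1] at hm
      have e0 : (z'.1, z'.2) = z' := rfl
      rw [e0] at hm
      exact ⟨ky * nN, hm, Nat.mul_le_mul_left ky (le_trans (le_max_left _ _) (le_max_right _ _))⟩
    · have hm := moveS hS ky z'.1 z'.2 hzq'.1 hzq'.2
      have e1 : z'.2 + (ky : ℤ) = z.2 := by omega
      rw [e1] at hm
      have e0 : (z'.1, z'.2) = z' := rfl
      rw [e0] at hm
      exact ⟨ky * nS, hm, Nat.mul_le_mul_left ky (le_trans (le_max_right _ _) (le_max_right _ _))⟩
  obtain ⟨n1, hg1, hn1⟩ := phase1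
  obtain ⟨n2, hg2, hn2⟩ := phase2
  refine ⟨n1 + n2, hg1.trans hg2, ?_⟩
  calc n1 + n2 ≤ kx * N + ky * N := Nat.add_le_add hn1 hn2
    _ = (kx + ky) * N := by ring

end Moves

lemma natAbs_fst_le (w : ℤ × ℤ) : ((w.1.natAbs : ℝ)) ≤ normZ w := by
  have h1 : ((w.1.natAbs : ℝ)) = |(w.1 : ℝ)| := by
    rw [Nat.cast_natAbs]; push_cast; ring
  rw [h1, normZ, norE, toR, ← Real.sqrt_sq_eq_abs]
  exact Real.sqrt_le_sqrt (by nlinarith [sq_nonneg ((w.2 : ℝ))])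

lemma natAbs_snd_le (w : ℤ × ℤ) : ((w.2.natAbs : ℝ)) ≤ normZ w := by
  have h1 : ((w.2.natAbs : ℝ)) = |(w.2 : ℝ)| := by
    rw [Nat.cast_natAbs]; push_cast; ring
  rw [h1, normZ, norE, toR, ← Real.sqrt_sq_eq_abs]
  exact Real.sqrt_le_sqrt (by nlinarith [sq_nonneg ((w.1 : ℝ))])

/-- **Proposition 5.1.**  Under (H2), the killed random walk `Z₊` satisfies the
communication condition on the whole space `ℕ*×ℕ*`: there exist `θ > 0` and `C > 0`
such that any pair of distinct points `z, z'` of the quadrant can be joined by a path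
`z₀ = z, z₁, …, zₙ = z'` inside the quadrant with `n ≤ C|z'−z|`, `|zᵢ−zᵢ₋₁| ≤ C` and
`P_{zᵢ₋₁}(Z₊(1) = zᵢ) ≥ θ` for all `i = 1,…,n`. -/
theorem killed_walk_communication_condition
    (μ : ℤ × ℤ → ℝ≥0∞) (hprob : ∑' z : ℤ × ℤ, μ z = 1)
    (h2 : H2 μ) :
    ∃ θ : ℝ≥0∞, 0 < θ ∧ ∃ C : ℝ, 0 < C ∧
      ∀ z ∈ quadrant, ∀ z' ∈ quadrant, z ≠ z' →
        ∃ n : ℕ, ∃ path : ℕ → ℤ × ℤ,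
          path 0 = z ∧ path n = z' ∧ (n : ℝ) ≤ C * normZ (z' - z) ∧
          ∀ i : ℕ, 1 ≤ i → i ≤ n →
            path i ∈ quadrant ∧
            normZ (path i - path (i - 1)) ≤ C ∧
            θ ≤ nstepK μ quadrant 1 (path (i - 1)) (path i) := by
  have hq11 : ((1 : ℤ), (1 : ℤ)) ∈ quadrant := ⟨one_pos, one_pos⟩
  have hq21 : ((2 : ℤ), (1 : ℤ)) ∈ quadrant := ⟨two_pos, one_pos⟩
  have hq12 : ((1 : ℤ), (2 : ℤ)) ∈ quadrant := ⟨one_pos, two_pos⟩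
  obtain ⟨nE, hEp⟩ := h2 _ hq11 _ hq21
  obtain ⟨nW, hWp⟩ := h2 _ hq21 _ hq11
  obtain ⟨nN, hNp⟩ := h2 _ hq11 _ hq12
  obtain ⟨nS, hSp⟩ := h2 _ hq12 _ hq11
  obtain ⟨θE, hθE, CE, hCE, hgE⟩ := goodpath_of_nstepK_pos hEp
  obtain ⟨θW, hθW, CW, hCW, hgW⟩ := goodpath_of_nstepK_pos hWp
  obtain ⟨θN, hθN, CN, hCN, hgN⟩ := goodpath_of_nstepK_pos hNp
  obtain ⟨θS, hθS, CS, hCS, hgS⟩ := goodpath_of_nstepK_pos hSp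
  set θ : ℝ≥0∞ := min (min θE θW) (min θN θS) with hθdef
  have hθpos : 0 < θ := lt_min (lt_min hθE hθW) (lt_min hθN hθS)
  set C0 : ℝ := max (max CE CW) (max CN CS) with hC0def
  set N : ℕ := max (max nE nW) (max nN nS) with hNdef
  set C : ℝ := C0 + 2 * (N : ℝ) + 1 with hCdef
  have hC0nn : 0 ≤ C0 := le_trans hCE (le_trans (le_max_left _ _) (le_max_left _ _))
  have hNnn : (0 : ℝ) ≤ (N : ℝ) := Nat.cast_nonneg _
  have hC0C : C0 ≤ C := by rw [hCdef]; linarith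
  have hCpos : 0 < C := by rw [hCdef]; linarith
  have hgE' : GoodPath μ θ C _ _ nE :=
    hgE.mono (le_trans (min_le_left _ _) (min_le_left _ _))
      (le_trans (le_trans (le_max_left _ _) (le_max_left _ _)) hC0C)
  have hgW' : GoodPath μ θ C _ _ nW :=
    hgW.mono (le_trans (min_le_left _ _) (min_le_right _ _))
      (le_trans (le_trans (le_max_right _ _) (le_max_left _ _)) hC0C)
  have hgN' : GoodPath μ θ C _ _ nN :=
    hgN.mono (le_trans (min_le_right _ _) (min_le_left _ _))
      (le_trans (le_trans (le_max_left _ _) (le_max_right _ _)) hC0C)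
  have hgS' : GoodPath μ θ C _ _ nS :=
    hgS.mono (le_trans (min_le_right _ _) (min_le_right _ _))
      (le_trans (le_trans (le_max_right _ _) (le_max_right _ _)) hC0C)
  refine ⟨θ, hθpos, C, hCpos, ?_⟩
  intro z hz z' hz' _
  obtain ⟨n, hg, hn⟩ := key hgE' hgW' hgN' hgS' z hz z' hz'
  rw [← hNdef] at hn
  obtain ⟨p, hp0, hpn, hp⟩ := hg
  refine ⟨n, p, hp0, hpn, ?_, ?_⟩
  · have hkx : (((z'.1 - z.1).natAbs : ℕ) : ℝ) ≤ normZ (z' - z) := by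
      have e : (z' - z).1 = z'.1 - z.1 := rfl
      have := natAbs_fst_le (z' - z)
      rwa [e] at this
    have hky : (((z'.2 - z.2).natAbs : ℕ) : ℝ) ≤ normZ (z' - z) := by
      have e : (z' - z).2 = z'.2 - z.2 := rfl
      have := natAbs_snd_le (z' - z)
      rwa [e] at this
    have hn' : (n : ℝ) ≤ (((z'.1 - z.1).natAbs : ℝ) + ((z'.2 - z.2).natAbs : ℝ)) * (N : ℝ) := by
      have h := Nat.cast_le (α := ℝ).mpr hn
      rw [Nat.cast_mul, Nat.cast_add] at h
      exact h
    have hnorm : 0 ≤ normZ (z' - z) := normZ_nonneg _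
    have hNx : ((z'.1 - z.1).natAbs : ℝ) ≥ 0 := Nat.cast_nonneg _
    have hNy : ((z'.2 - z.2).natAbs : ℝ) ≥ 0 := Nat.cast_nonneg _
    have h2N : 2 * (N : ℝ) ≤ C := by rw [hCdef]; linarith
    calc (n : ℝ) ≤ (((z'.1 - z.1).natAbs : ℝ) + ((z'.2 - z.2).natAbs : ℝ)) * (N : ℝ) := hn'
      _ ≤ (normZ (z' - z) + normZ (z' - z)) * (N : ℝ) := by
          apply mul_le_mul_of_nonneg_right _ hNnn
          linarith
      _ = (2 * (N : ℝ)) * normZ (z' - z) := by ring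
      _ ≤ C * normZ (z' - z) := mul_le_mul_of_nonneg_right h2N hnorm
  · intro i hi1 hi2
    obtain ⟨hquad, hnrm, hmu⟩ := hp i hi1 hi2
    refine ⟨hquad, hnrm, ?_⟩
    rw [nstepK_one, if_pos hquad]
    exact hmu


end KRWQ
end

section
/- Under hypotheses (H1) and (H3), for any q ∈ 𝒮²₊ and any δ > 0 there is ε > 0 small enough such that inf{ λ_ε(q,w) : w ∈ ℝ² with inf_{θ>0} |w − θq| ≥ δ } > a(q)·q, where λ_ε(q,w) = a(w)·w + a(q−w)·(q−w) − ε|w|. -/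
open scoped ENNReal Classical
open Filter

namespace KRWQ

/-! ### Auxiliary lemmas for Lemma 6.1 -/

section Aux

lemma dot_add_left (a b w : ℝ × ℝ) : dot (a + b) w = dot a w + dot b w := by
  simp [dot]; ring

lemma dot_smul_left (t : ℝ) (a w : ℝ × ℝ) : dot (t • a) w = t * dot a w := by
  simp [dot]; ring

lemma dot_zero_left (w : ℝ × ℝ) : dot 0 w = 0 := by simp [dot]

lemma dot_zero_right (a : ℝ × ℝ) : dot a 0 = 0 := by simp [dot]

lemma dot_add_right (a x y : ℝ × ℝ) : dot a (x + y) = dot a x + dot a y := by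
  simp [dot]; ring

lemma dot_smul_right (t : ℝ) (a w : ℝ × ℝ) : dot a (t • w) = t * dot a w := by
  simp [dot]; ring

lemma dot_neg_right (a w : ℝ × ℝ) : dot a (-w) = -dot a w := by
  simp [dot]; ring

lemma dot_sub_left (a b w : ℝ × ℝ) : dot (a - b) w = dot a w - dot b w := by
  simp [dot]; ring

lemma norE_nonneg (p : ℝ × ℝ) : 0 ≤ norE p := Real.sqrt_nonneg _

lemma norE_zero : norE (0 : ℝ × ℝ) = 0 := by simp [norE]

lemma norE_pos {p : ℝ × ℝ} (h : p ≠ 0) : 0 < norE p := by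
  apply Real.sqrt_pos.2
  by_contra hc
  have h1 : p.1 ^ 2 + p.2 ^ 2 ≤ 0 := le_of_not_gt hc
  have h2 : p.1 = 0 ∧ p.2 = 0 := by
    constructor <;> nlinarith [sq_nonneg p.1, sq_nonneg p.2]
  exact h (Prod.ext h2.1 h2.2)

lemma norE_smul (t : ℝ) (p : ℝ × ℝ) : norE (t • p) = |t| * norE p := by
  have : (t • p).1 ^ 2 + (t • p).2 ^ 2 = t ^ 2 * (p.1 ^ 2 + p.2 ^ 2) := by
    simp [Prod.smul_fst, Prod.smul_snd]; ring
  rw [norE, this, Real.sqrt_mul (sq_nonneg t), Real.sqrt_sq_eq_abs, norE]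

lemma norE_neg (p : ℝ × ℝ) : norE (-p) = norE p := by
  simp [norE]

lemma continuous_norE : Continuous norE := by
  apply Real.continuous_sqrt.comp
  exact (continuous_fst.pow 2).add (continuous_snd.pow 2)

lemma norm_le_norE (p : ℝ × ℝ) : ‖p‖ ≤ norE p := by
  have h1 : |p.1| ≤ norE p := by
    rw [← Real.sqrt_sq_eq_abs]
    exact Real.sqrt_le_sqrt (by nlinarith [sq_nonneg p.2])
  have h2 : |p.2| ≤ norE p := by
    rw [← Real.sqrt_sq_eq_abs]
    exact Real.sqrt_le_sqrt (by nlinarith [sq_nonneg p.1])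
  rw [Prod.norm_def]
  simp only [Real.norm_eq_abs]
  exact max_le h1 h2

/-- Taylor-type bound for the exponential. -/
lemma exp_taylor_bound (s : ℝ) : Real.exp s ≤ 1 + s + s ^ 2 * Real.exp |s| := by
  have h0 : Real.exp s * Real.exp (-s) = 1 := by rw [← Real.exp_add]; simp
  have h1 : (-s) + 1 ≤ Real.exp (-s) := Real.add_one_le_exp _
  have h1' : ((-s) + 1) * Real.exp s ≤ 1 := by
    calc ((-s) + 1) * Real.exp s ≤ Real.exp (-s) * Real.exp s :=
          mul_le_mul_of_nonneg_right h1 (Real.exp_pos s).le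
      _ = 1 := by rw [mul_comm]; exact h0
  have h2 : Real.exp s - 1 - s ≤ s * (Real.exp s - 1) := by nlinarith
  rcases le_or_gt 0 s with hs | hs
  · rw [abs_of_nonneg hs]
    nlinarith [mul_le_mul_of_nonneg_left (show Real.exp s - 1 ≤ s * Real.exp s by nlinarith) hs]
  · have h4 : 1 - Real.exp s ≤ -s := by nlinarith [Real.add_one_le_exp s]
    have h5 : (-s) * (1 - Real.exp s) ≤ (-s) * (-s) :=
      mul_le_mul_of_nonneg_left h4 (by linarith)
    have h6 : (1 : ℝ) ≤ Real.exp |s| := Real.one_le_exp (abs_nonneg s)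
    nlinarith [sq_nonneg s]

lemma abs_le_exp_add (x : ℝ) : |x| ≤ Real.exp x + Real.exp (-x) := by
  rcases le_or_gt 0 x with hx | hx
  · rw [abs_of_nonneg hx]
    nlinarith [Real.add_one_le_exp x, Real.exp_pos (-x)]
  · rw [abs_of_neg hx]
    nlinarith [Real.add_one_le_exp (-x), Real.exp_pos x]

lemma sq_mul_exp_abs_le (x : ℝ) :
    x ^ 2 * Real.exp |x| ≤ Real.exp (3 * x) + Real.exp (-(3 * x)) := by
  have h1 : |x| ≤ Real.exp |x| := by nlinarith [Real.add_one_le_exp |x|]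
  have h2 : x ^ 2 ≤ Real.exp |x| * Real.exp |x| := by nlinarith [abs_nonneg x, sq_abs x]
  have h3 : x ^ 2 * Real.exp |x| ≤ Real.exp (3 * |x|) := by
    have he : Real.exp |x| * Real.exp |x| * Real.exp |x| = Real.exp (3 * |x|) := by
      rw [← Real.exp_add, ← Real.exp_add]; ring_nf
    calc x ^ 2 * Real.exp |x| ≤ Real.exp |x| * Real.exp |x| * Real.exp |x| :=
          mul_le_mul_of_nonneg_right h2 (Real.exp_pos _).le
      _ = Real.exp (3 * |x|) := he
  rcases le_or_gt 0 x with hx | hx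
  · have e3 : Real.exp (3 * |x|) = Real.exp (3 * x) := by rw [abs_of_nonneg hx]
    nlinarith [Real.exp_pos (-(3 * x))]
  · have e3 : Real.exp (3 * |x|) = Real.exp (-(3 * x)) := by rw [abs_of_neg hx]; ring_nf
    nlinarith [Real.exp_pos (3 * x)]

end Aux
section Analytic

variable {μ : ℤ × ℤ → ℝ≥0∞}

/-- The real-valued jump generating function. -/
noncomputable def phiR (μ : ℤ × ℤ → ℝ≥0∞) (a : ℝ × ℝ) : ℝ :=
  ∑' z : ℤ × ℤ, (μ z).toReal * Real.exp (dot a (toR z))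

lemma mu_ne_top (hprob : ∑' z : ℤ × ℤ, μ z = 1) (z : ℤ × ℤ) : μ z ≠ ⊤ := by
  have h : μ z ≤ 1 := hprob ▸ ENNReal.le_tsum z
  exact (lt_of_le_of_lt h ENNReal.one_lt_top).ne

lemma summable_phi (h3 : H3 μ) (a : ℝ × ℝ) :
    Summable (fun z : ℤ × ℤ => (μ z).toReal * Real.exp (dot a (toR z))) := by
  have h := ENNReal.summable_toReal
    (f := fun z : ℤ × ℤ => μ z * ENNReal.ofReal (Real.exp (dot a (toR z)))) (h3 a).ne
  refine h.congr fun z => ?_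
  rw [ENNReal.toReal_mul, ENNReal.toReal_ofReal (Real.exp_pos _).le]

lemma jumpGF_eq_ofReal (hprob : ∑' z : ℤ × ℤ, μ z = 1) (h3 : H3 μ) (a : ℝ × ℝ) :
    jumpGF μ a = ENNReal.ofReal (phiR μ a) := by
  rw [phiR, ENNReal.ofReal_tsum_of_nonneg
    (fun z => mul_nonneg ENNReal.toReal_nonneg (Real.exp_pos _).le) (summable_phi h3 a)]
  unfold jumpGF
  congr 1
  funext z
  rw [ENNReal.ofReal_mul ENNReal.toReal_nonneg, ENNReal.ofReal_toReal (mu_ne_top hprob z)]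

lemma jump_le_one_iff (hprob : ∑' z : ℤ × ℤ, μ z = 1) (h3 : H3 μ) (a : ℝ × ℝ) :
    jumpGF μ a ≤ 1 ↔ phiR μ a ≤ 1 := by
  rw [jumpGF_eq_ofReal hprob h3]
  exact ENNReal.ofReal_le_one

lemma jump_eq_one_iff (hprob : ∑' z : ℤ × ℤ, μ z = 1) (h3 : H3 μ) (a : ℝ × ℝ) :
    jumpGF μ a = 1 ↔ phiR μ a = 1 := by
  rw [jumpGF_eq_ofReal hprob h3]
  exact ENNReal.ofReal_eq_one

lemma summable_dom (h3 : H3 μ) (a b : ℝ × ℝ) (r : ℤ × ℤ → ℝ)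
    (hr : ∀ z, |r z| ≤ Real.exp (dot a (toR z)) + Real.exp (dot b (toR z))) :
    Summable (fun z : ℤ × ℤ => (μ z).toReal * r z) := by
  apply Summable.of_abs
  apply Summable.of_nonneg_of_le (fun z => abs_nonneg _) (fun z => ?_)
    ((summable_phi h3 a).add (summable_phi h3 b))
  rw [abs_mul, abs_of_nonneg (ENNReal.toReal_nonneg (a := μ z))]
  calc (μ z).toReal * |r z|
      ≤ (μ z).toReal * (Real.exp (dot a (toR z)) + Real.exp (dot b (toR z))) :=
        mul_le_mul_of_nonneg_left (hr z) ENNReal.toReal_nonneg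
    _ = (μ z).toReal * Real.exp (dot a (toR z)) + (μ z).toReal * Real.exp (dot b (toR z)) := by
        ring

lemma summable_grad (h3 : H3 μ) (a v : ℝ × ℝ) :
    Summable (fun z : ℤ × ℤ =>
      (μ z).toReal * (Real.exp (dot a (toR z)) * dot v (toR z))) := by
  apply summable_dom h3 (a + v) (a - v)
  intro z
  rw [abs_mul, abs_of_nonneg (Real.exp_pos _).le]
  have h := abs_le_exp_add (dot v (toR z))
  have he1 : Real.exp (dot a (toR z)) * Real.exp (dot v (toR z))
      = Real.exp (dot (a + v) (toR z)) := by rw [dot_add_left, Real.exp_add]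
  have he2 : Real.exp (dot a (toR z)) * Real.exp (-dot v (toR z))
      = Real.exp (dot (a - v) (toR z)) := by rw [dot_sub_left, Real.exp_sub, Real.exp_neg]; ring
  nlinarith [Real.exp_pos (dot a (toR z)), abs_nonneg (dot v (toR z))]

/-- Gradient inequality for `phiR` (convexity, via `1 + x ≤ eˣ`). -/
lemma phiR_grad_ineq (h3 : H3 μ) (a₀ v : ℝ × ℝ) :
    phiR μ a₀ + (∑' z : ℤ × ℤ,
        (μ z).toReal * (Real.exp (dot a₀ (toR z)) * dot v (toR z)))
      ≤ phiR μ (a₀ + v) := by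
  have hsum1 := summable_phi h3 a₀
  have hsum2 := summable_grad h3 a₀ v
  rw [phiR, ← Summable.tsum_add hsum1 hsum2]
  apply Summable.tsum_le_tsum _ (hsum1.add hsum2) (summable_phi h3 (a₀ + v))
  intro z
  have hx := Real.add_one_le_exp (dot v (toR z))
  have he : Real.exp (dot (a₀ + v) (toR z))
      = Real.exp (dot a₀ (toR z)) * Real.exp (dot v (toR z)) := by
    rw [dot_add_left, Real.exp_add]
  rw [he]
  nlinarith [ENNReal.toReal_nonneg (a := μ z), Real.exp_pos (dot a₀ (toR z)),
    mul_nonneg (ENNReal.toReal_nonneg (a := μ z)) (Real.exp_pos (dot a₀ (toR z))).le]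

/-- Descent lemma: if the directional derivative is negative, `phiR` dips below 1. -/
lemma phiR_descent (h3 : H3 μ) (a₀ v : ℝ × ℝ) (hφ : phiR μ a₀ = 1)
    (hG : (∑' z : ℤ × ℤ,
        (μ z).toReal * (Real.exp (dot a₀ (toR z)) * dot v (toR z))) < 0) :
    ∃ t : ℝ, 0 < t ∧ phiR μ (a₀ + t • v) < 1 := by
  set G := ∑' z : ℤ × ℤ, (μ z).toReal * (Real.exp (dot a₀ (toR z)) * dot v (toR z)) with hGdef
  set C := phiR μ (a₀ + (3 : ℝ) • v) + phiR μ (a₀ - (3 : ℝ) • v) with hCdef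
  have hC0 : 0 ≤ C := by
    apply add_nonneg <;>
      exact tsum_nonneg fun z => mul_nonneg ENNReal.toReal_nonneg (Real.exp_pos _).le
  have hden : (0 : ℝ) < 2 * C + 2 := by linarith
  set t := min 1 (-G / (2 * C + 2)) with htdef
  have ht0 : 0 < t := lt_min one_pos (div_pos (neg_pos.2 hG) hden)
  have ht1 : t ≤ 1 := min_le_left _ _
  have ht2 : t * (2 * C + 2) ≤ -G := by
    have := min_le_right 1 (-G / (2 * C + 2))
    calc t * (2 * C + 2) ≤ (-G / (2 * C + 2)) * (2 * C + 2) :=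
          mul_le_mul_of_nonneg_right this hden.le
      _ = -G := by field_simp
  refine ⟨t, ht0, ?_⟩
  -- summability of the three pieces
  have hsum1 := summable_phi h3 a₀
  have hsum2 := summable_grad h3 a₀ v
  have hsum3 : Summable (fun z : ℤ × ℤ => (μ z).toReal *
      (Real.exp (dot (a₀ + (3 : ℝ) • v) (toR z)) + Real.exp (dot (a₀ - (3 : ℝ) • v) (toR z)))) := by
    refine Summable.congr ((summable_phi h3 (a₀ + (3 : ℝ) • v)).add
      (summable_phi h3 (a₀ - (3 : ℝ) • v))) fun z => by ring
  -- the termwise bound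
  have hterm : ∀ z : ℤ × ℤ,
      (μ z).toReal * Real.exp (dot (a₀ + t • v) (toR z)) ≤
        (μ z).toReal * Real.exp (dot a₀ (toR z))
        + t * ((μ z).toReal * (Real.exp (dot a₀ (toR z)) * dot v (toR z)))
        + t ^ 2 * ((μ z).toReal *
            (Real.exp (dot (a₀ + (3 : ℝ) • v) (toR z))
              + Real.exp (dot (a₀ - (3 : ℝ) • v) (toR z)))) := by
    intro z
    set x := dot v (toR z) with hxdef
    set E := Real.exp (dot a₀ (toR z)) with hEdef
    have hE : 0 < E := Real.exp_pos _
    have hm : 0 ≤ (μ z).toReal := ENNReal.toReal_nonneg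
    have he : Real.exp (dot (a₀ + t • v) (toR z)) = E * Real.exp (t * x) := by
      rw [dot_add_left, dot_smul_left, Real.exp_add]
    have htx : Real.exp (t * x) ≤ 1 + t * x + (t * x) ^ 2 * Real.exp |t * x| :=
      exp_taylor_bound _
    have habs : Real.exp |t * x| ≤ Real.exp |x| := by
      apply Real.exp_le_exp.2
      rw [abs_mul, abs_of_pos ht0]
      nlinarith [abs_nonneg x]
    have hq : (t * x) ^ 2 * Real.exp |t * x| ≤ t ^ 2 * (x ^ 2 * Real.exp |x|) := by
      have h1 : (t * x) ^ 2 * Real.exp |t * x| ≤ (t * x) ^ 2 * Real.exp |x| :=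
        mul_le_mul_of_nonneg_left habs (sq_nonneg _)
      calc (t * x) ^ 2 * Real.exp |t * x| ≤ (t * x) ^ 2 * Real.exp |x| := h1
        _ = t ^ 2 * (x ^ 2 * Real.exp |x|) := by ring
    have hcube : E * (x ^ 2 * Real.exp |x|) ≤
        Real.exp (dot (a₀ + (3 : ℝ) • v) (toR z))
          + Real.exp (dot (a₀ - (3 : ℝ) • v) (toR z)) := by
      have h1 := sq_mul_exp_abs_le x
      have he1 : Real.exp (dot (a₀ + (3 : ℝ) • v) (toR z)) = E * Real.exp (3 * x) := by
        rw [dot_add_left, dot_smul_left, Real.exp_add]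
      have he2 : Real.exp (dot (a₀ - (3 : ℝ) • v) (toR z)) = E * Real.exp (-(3 * x)) := by
        rw [dot_sub_left, dot_smul_left, Real.exp_sub, Real.exp_neg]
        field_simp
        rw [hxdef, hEdef]
        ring
      rw [he1, he2]
      nlinarith
    rw [he]
    have hfin : E * Real.exp (t * x) ≤ E + t * (E * x) + t ^ 2 *
        (Real.exp (dot (a₀ + (3 : ℝ) • v) (toR z))
          + Real.exp (dot (a₀ - (3 : ℝ) • v) (toR z))) := by
      calc E * Real.exp (t * x) ≤ E * (1 + t * x + (t * x) ^ 2 * Real.exp |t * x|) :=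
            mul_le_mul_of_nonneg_left htx hE.le
        _ ≤ E * (1 + t * x + t ^ 2 * (x ^ 2 * Real.exp |x|)) := by nlinarith
        _ = E + t * (E * x) + t ^ 2 * (E * (x ^ 2 * Real.exp |x|)) := by ring
        _ ≤ E + t * (E * x) + t ^ 2 *
            (Real.exp (dot (a₀ + (3 : ℝ) • v) (toR z))
              + Real.exp (dot (a₀ - (3 : ℝ) • v) (toR z))) := by nlinarith [sq_nonneg t]
    calc (μ z).toReal * (E * Real.exp (t * x))
        ≤ (μ z).toReal * (E + t * (E * x) + t ^ 2 *
            (Real.exp (dot (a₀ + (3 : ℝ) • v) (toR z))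
              + Real.exp (dot (a₀ - (3 : ℝ) • v) (toR z)))) :=
          mul_le_mul_of_nonneg_left hfin hm
      _ = _ := by ring
  -- sum up
  have hbound : phiR μ (a₀ + t • v) ≤ phiR μ a₀ + t * G + t ^ 2 * C := by
    have hrhs : Summable (fun z : ℤ × ℤ =>
        (μ z).toReal * Real.exp (dot a₀ (toR z))
        + t * ((μ z).toReal * (Real.exp (dot a₀ (toR z)) * dot v (toR z)))
        + t ^ 2 * ((μ z).toReal *
            (Real.exp (dot (a₀ + (3 : ℝ) • v) (toR z))
              + Real.exp (dot (a₀ - (3 : ℝ) • v) (toR z))))) :=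
      (hsum1.add (hsum2.mul_left t)).add (hsum3.mul_left (t ^ 2))
    have h1 : phiR μ (a₀ + t • v) ≤ ∑' z : ℤ × ℤ,
        ((μ z).toReal * Real.exp (dot a₀ (toR z))
        + t * ((μ z).toReal * (Real.exp (dot a₀ (toR z)) * dot v (toR z)))
        + t ^ 2 * ((μ z).toReal *
            (Real.exp (dot (a₀ + (3 : ℝ) • v) (toR z))
              + Real.exp (dot (a₀ - (3 : ℝ) • v) (toR z))))) :=
      Summable.tsum_le_tsum hterm (summable_phi h3 _) hrhs
    have h2 : (∑' z : ℤ × ℤ,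
        ((μ z).toReal * Real.exp (dot a₀ (toR z))
        + t * ((μ z).toReal * (Real.exp (dot a₀ (toR z)) * dot v (toR z)))
        + t ^ 2 * ((μ z).toReal *
            (Real.exp (dot (a₀ + (3 : ℝ) • v) (toR z))
              + Real.exp (dot (a₀ - (3 : ℝ) • v) (toR z))))))
        = phiR μ a₀ + t * G + t ^ 2 * C := by
      rw [Summable.tsum_add (hsum1.add (hsum2.mul_left t)) (hsum3.mul_left (t ^ 2)),
        Summable.tsum_add hsum1 (hsum2.mul_left t), tsum_mul_left, tsum_mul_left]
      have h3' : (∑' z : ℤ × ℤ, (μ z).toReal *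
          (Real.exp (dot (a₀ + (3 : ℝ) • v) (toR z))
            + Real.exp (dot (a₀ - (3 : ℝ) • v) (toR z)))) = C := by
        rw [hCdef, phiR, phiR, ← Summable.tsum_add (summable_phi h3 (a₀ + (3 : ℝ) • v))
          (summable_phi h3 (a₀ - (3 : ℝ) • v))]
        exact tsum_congr fun z => by ring
      rw [h3']
      rfl
    linarith [h1, h2 ▸ h1]
  have hneg : t * G + t ^ 2 * C < 0 := by nlinarith
  calc phiR μ (a₀ + t • v) ≤ phiR μ a₀ + t * G + t ^ 2 * C := hbound
    _ = 1 + (t * G + t ^ 2 * C) := by rw [hφ]; ring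
    _ < 1 := by linarith

end Analytic
section Geometry

variable {μ : ℤ × ℤ → ℝ≥0∞}

lemma phiR_zero (hprob : ∑' z : ℤ × ℤ, μ z = 1) : phiR μ 0 = 1 := by
  have h : ∀ z : ℤ × ℤ, (μ z).toReal * Real.exp (dot 0 (toR z)) = (μ z).toReal := by
    intro z
    rw [dot_zero_left, Real.exp_zero, mul_one]
  rw [phiR, tsum_congr h, ← ENNReal.tsum_toReal_eq (mu_ne_top hprob), hprob]
  rfl

/-- Slater point: there is `b` with `phiR μ b < 1`. -/
lemma slater (hprob : ∑' z : ℤ × ℤ, μ z = 1) (h1 : H1 μ) (h3 : H3 μ) :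
    ∃ b : ℝ × ℝ, phiR μ b < 1 := by
  obtain ⟨-, hs1, hs2, hm⟩ := h1
  set m1 := ∑' z : ℤ × ℤ, ((z.1 : ℝ)) * (μ z).toReal with hm1
  set m2 := ∑' z : ℤ × ℤ, ((z.2 : ℝ)) * (μ z).toReal with hm2
  set v : ℝ × ℝ := (-m1, -m2) with hv
  have hG : (∑' z : ℤ × ℤ,
      (μ z).toReal * (Real.exp (dot 0 (toR z)) * dot v (toR z))) = -(m1 ^ 2 + m2 ^ 2) := by
    have hcongr : ∀ z : ℤ × ℤ,
        (μ z).toReal * (Real.exp (dot 0 (toR z)) * dot v (toR z))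
          = (-m1) * (((z.1 : ℝ)) * (μ z).toReal) + (-m2) * (((z.2 : ℝ)) * (μ z).toReal) := by
      intro z
      rw [dot_zero_left, Real.exp_zero]
      simp only [dot, toR, hv]
      ring
    rw [tsum_congr hcongr, Summable.tsum_add (hs1.mul_left _) (hs2.mul_left _),
      tsum_mul_left, tsum_mul_left, ← hm1, ← hm2]
    ring
  have hmpos : 0 < m1 ^ 2 + m2 ^ 2 := by
    rcases eq_or_ne m1 0 with h1' | h1'
    · rcases eq_or_ne m2 0 with h2' | h2'
      · exact absurd (by rw [h1', h2'] : (m1, m2) = ((0 : ℝ), (0 : ℝ))) hm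
      · nlinarith [sq_nonneg m1, mul_self_pos.2 h2']
    · nlinarith [sq_nonneg m2, mul_self_pos.2 h1']
  obtain ⟨t, ht, hlt⟩ := phiR_descent h3 0 v (phiR_zero hprob) (by rw [hG]; linarith)
  exact ⟨0 + t • v, hlt⟩

lemma jumpGF_aOf_eq_one {aOf : ℝ × ℝ → ℝ × ℝ} (haOf : IsDirMap μ aOf)
    {w : ℝ × ℝ} (hw : w ≠ 0) : jumpGF μ (aOf w) = 1 := (haOf w hw).1

/-- The key injectivity lemma: if `aOf w = aOf q` then `w` lies on the ray `ℝ₊ q`. -/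
lemma eq_ray (hprob : ∑' z : ℤ × ℤ, μ z = 1) (h1 : H1 μ) (h3 : H3 μ)
    {aOf : ℝ × ℝ → ℝ × ℝ} (haOf : IsDirMap μ aOf)
    {q w : ℝ × ℝ} (hq : q ≠ 0) (hw : w ≠ 0) (heq : aOf w = aOf q) :
    ∃ θ : ℝ, 0 < θ ∧ w = θ • q := by
  set a₀ := aOf q with ha₀
  have hφ1 : phiR μ a₀ = 1 := (jump_eq_one_iff hprob h3 _).1 (haOf q hq).1
  set g : ℝ × ℝ → ℝ := fun v => ∑' z : ℤ × ℤ,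
    (μ z).toReal * (Real.exp (dot a₀ (toR z)) * dot v (toR z)) with hg
  set G : ℝ × ℝ := (g (1, 0), g (0, 1)) with hGv
  have hglin : ∀ v : ℝ × ℝ, g v = dot v G := by
    intro v
    have hcongr : ∀ z : ℤ × ℤ,
        (μ z).toReal * (Real.exp (dot a₀ (toR z)) * dot v (toR z))
          = v.1 * ((μ z).toReal * (Real.exp (dot a₀ (toR z)) * dot (1, 0) (toR z)))
            + v.2 * ((μ z).toReal * (Real.exp (dot a₀ (toR z)) * dot (0, 1) (toR z))) := by
      intro z
      simp only [dot, toR]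
      ring
    have h1s := (summable_grad h3 a₀ ((1 : ℝ), (0 : ℝ))).mul_left v.1
    have h2s := (summable_grad h3 a₀ ((0 : ℝ), (1 : ℝ))).mul_left v.2
    rw [hg]
    simp only
    rw [tsum_congr hcongr, Summable.tsum_add h1s h2s, tsum_mul_left, tsum_mul_left]
    simp [dot, hGv, hg]
  -- claim 1: strict descent directions are polar to any u with aOf u = a₀
  have claim1 : ∀ u : ℝ × ℝ, u ≠ 0 → aOf u = a₀ → ∀ v : ℝ × ℝ, dot v G < 0 → dot v u ≤ 0 := by
    intro u hu hau v hv
    have hgv : g v < 0 := by rw [hglin v]; exact hv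
    obtain ⟨t, ht, hlt⟩ := phiR_descent h3 a₀ v hφ1 hgv
    have hvne : v ≠ 0 := by
      intro h0
      rw [h0, dot_zero_left] at hv
      exact lt_irrefl 0 hv
    have hne : a₀ + t • v ≠ aOf u := by
      rw [hau]
      intro h
      have h' : t • v = 0 := by
        have := congrArg (fun x => x - a₀) h
        simpa [add_sub_cancel_left] using this
      rcases smul_eq_zero.1 h' with h'' | h''
      · exact ht.ne' h''
      · exact hvne h''
    have hle : jumpGF μ (a₀ + t • v) ≤ 1 := (jump_le_one_iff hprob h3 _).2 hlt.le
    have hstrict := (haOf u hu).2 _ hle hne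
    rw [hau, dot_add_left, dot_smul_left] at hstrict
    nlinarith
  -- claim 2 : G ≠ 0
  have hGne : G ≠ 0 := by
    intro h0
    obtain ⟨b, hb⟩ := slater hprob h1 h3
    have hgr := phiR_grad_ineq h3 a₀ (b - a₀)
    have : g (b - a₀) = 0 := by rw [hglin, h0, dot_zero_right]
    rw [hg] at this
    simp only at this
    rw [this, hφ1, add_sub_cancel] at hgr
    linarith
  have hGG : 0 < dot G G := by
    have h1' : ¬(G.1 = 0 ∧ G.2 = 0) := fun h => hGne (Prod.ext h.1 h.2)
    rcases eq_or_ne G.1 0 with hG1 | hG1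
    · have hG2 : G.2 ≠ 0 := fun h => h1' ⟨hG1, h⟩
      simp only [dot]
      nlinarith [mul_self_pos.2 hG2, mul_self_nonneg G.1]
    · simp only [dot]
      nlinarith [mul_self_pos.2 hG1, mul_self_nonneg G.2]
  -- claim 3: weak polar inequality
  have claim3 : ∀ u : ℝ × ℝ, u ≠ 0 → aOf u = a₀ → ∀ v : ℝ × ℝ, dot v G ≤ 0 → dot v u ≤ 0 := by
    intro u hu hau v hv
    by_contra hcon
    push_neg at hcon
    have key : ∀ ε : ℝ, 0 < ε → dot v u ≤ ε * dot G u := by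
      intro ε hε
      have h1' : dot (v - ε • G) G < 0 := by
        rw [dot_sub_left, dot_smul_left]
        nlinarith
      have h2' := claim1 u hu hau _ h1'
      rw [dot_sub_left, dot_smul_left] at h2'
      linarith
    set A := |dot G u| with hA
    have hA0 : 0 ≤ A := abs_nonneg _
    have hAle : dot G u ≤ A := le_abs_self _
    have hk := key (dot v u / (2 * (A + 1))) (by positivity)
    have : dot v u / (2 * (A + 1)) * dot G u ≤ dot v u / (2 * (A + 1)) * A :=
      mul_le_mul_of_nonneg_left hAle (by positivity)
    have hfrac : dot v u / (2 * (A + 1)) * A ≤ dot v u / 2 := by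
      rw [div_mul_eq_mul_div, div_le_div_iff₀ (by positivity) (by positivity)]
      nlinarith
    linarith
  -- perpendicular directions give equalities
  have hperp : ∀ u : ℝ × ℝ, u ≠ 0 → aOf u = a₀ →
      (-G.2 * u.1 + G.1 * u.2 = 0 ∧ 0 ≤ dot G u) := by
    intro u hu hau
    have e1 : dot (-G.2, G.1) G ≤ 0 := by simp only [dot]; ring_nf; exact le_refl _
    have e2 : dot (G.2, -G.1) G ≤ 0 := by simp only [dot]; ring_nf; exact le_refl _
    have e3 : dot (-G) G ≤ 0 := by
      have : dot (-G) G = -dot G G := by simp only [dot, Prod.fst_neg, Prod.snd_neg]; ring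
      rw [this]; linarith
    have c1 := claim3 u hu hau _ e1
    have c2 := claim3 u hu hau _ e2
    have c3 := claim3 u hu hau _ e3
    have hdotneg : dot (-G) u = -dot G u := by
      simp only [dot, Prod.fst_neg, Prod.snd_neg]; ring
    rw [hdotneg] at c3
    constructor
    · simp only [dot] at c1 c2
      nlinarith
    · linarith
  obtain ⟨hw1, hw2⟩ := hperp w hw heq
  obtain ⟨hq1, hq2⟩ := hperp q hq rfl
  -- w = cw • G, q = cq • G
  have hrep : ∀ u : ℝ × ℝ, -G.2 * u.1 + G.1 * u.2 = 0 → 0 ≤ dot G u → u ≠ 0 →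
      ∃ c : ℝ, 0 < c ∧ u = c • G := by
    intro u e1 e2 hu
    have hne : dot G G ≠ 0 := hGG.ne'
    have key1 : u.1 * dot G G = dot G u * G.1 := by
      simp only [dot]
      linear_combination (-G.2) * e1
    have key2 : u.2 * dot G G = dot G u * G.2 := by
      simp only [dot]
      linear_combination G.1 * e1
    have hrepr : u = (dot G u / dot G G) • G := by
      apply Prod.ext
      · simp only [Prod.smul_fst, smul_eq_mul]
        field_simp
        linarith [key1]
      · simp only [Prod.smul_snd, smul_eq_mul]
        field_simp
        linarith [key2]
    refine ⟨dot G u / dot G G, ?_, hrepr⟩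
    rcases lt_or_eq_of_le e2 with h | h
    · positivity
    · exfalso
      apply hu
      rw [hrepr, ← h]
      simp
  obtain ⟨cw, hcw, hwG⟩ := hrep w hw1 hw2 hw
  obtain ⟨cq, hcq, hqG⟩ := hrep q hq1 hq2 hq
  refine ⟨cw / cq, by positivity, ?_⟩
  rw [hwG, hqG, smul_smul, div_mul_cancel₀ _ hcq.ne']

end Geometry
section Support

variable {μ : ℤ × ℤ → ℝ≥0∞} {aOf : ℝ × ℝ → ℝ × ℝ}

lemma jumpGF_zero (hprob : ∑' z : ℤ × ℤ, μ z = 1) : jumpGF μ (0 : ℝ × ℝ) = 1 := by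
  unfold jumpGF
  have h : ∀ z : ℤ × ℤ, μ z * ENNReal.ofReal (Real.exp (dot 0 (toR z))) = μ z := by
    intro z
    rw [dot_zero_left, Real.exp_zero, ENNReal.ofReal_one, mul_one]
  rw [tsum_congr h, hprob]

lemma support_zero : support aOf (0 : ℝ × ℝ) = 0 := if_pos rfl

lemma support_eq {w : ℝ × ℝ} (hw : w ≠ 0) : support aOf w = dot (aOf w) w := if_neg hw

lemma dot_le_support (haOf : IsDirMap μ aOf) (a w : ℝ × ℝ) (ha : jumpGF μ a ≤ 1) :
    dot a w ≤ support aOf w := by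
  rcases eq_or_ne w 0 with hw | hw
  · rw [hw, dot_zero_right, support_zero]
  · rw [support_eq hw]
    rcases eq_or_ne a (aOf w) with hae | hae
    · rw [hae]
    · exact ((haOf w hw).2 a ha hae).le

lemma support_nonneg (hprob : ∑' z : ℤ × ℤ, μ z = 1) (haOf : IsDirMap μ aOf) (w : ℝ × ℝ) :
    0 ≤ support aOf w := by
  have h := dot_le_support haOf 0 w (le_of_eq (jumpGF_zero hprob))
  rwa [dot_zero_left] at h

lemma aOf_smul (haOf : IsDirMap μ aOf) {t : ℝ} (ht : 0 < t) {w : ℝ × ℝ} (hw : w ≠ 0) :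
    aOf (t • w) = aOf w := by
  by_contra hne
  have htw : t • w ≠ 0 := smul_ne_zero ht.ne' hw
  have h1 := (haOf w hw).2 (aOf (t • w)) (haOf (t • w) htw).1.le hne
  have h2 := (haOf (t • w) htw).2 (aOf w) (haOf w hw).1.le (Ne.symm hne)
  rw [dot_smul_right, dot_smul_right] at h2
  have h3 : dot (aOf w) w < dot (aOf (t • w)) w := by
    have := (mul_lt_mul_iff_right₀ ht).1 h2
    exact this
  linarith

lemma support_smul (haOf : IsDirMap μ aOf) {t : ℝ} (ht : 0 ≤ t) (w : ℝ × ℝ) :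
    support aOf (t • w) = t * support aOf w := by
  rcases eq_or_lt_of_le ht with h0 | h0
  · rw [← h0, zero_smul, support_zero, zero_mul]
  rcases eq_or_ne w 0 with hw | hw
  · rw [hw, smul_zero, support_zero, mul_zero]
  · have htw : t • w ≠ 0 := smul_ne_zero h0.ne' hw
    rw [support_eq htw, support_eq hw, aOf_smul haOf h0 hw, dot_smul_right]

lemma support_add_le (hprob : ∑' z : ℤ × ℤ, μ z = 1) (haOf : IsDirMap μ aOf) (x y : ℝ × ℝ) :
    support aOf (x + y) ≤ support aOf x + support aOf y := by
  rcases eq_or_ne (x + y) 0 with h | h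
  · rw [h, support_zero]
    exact add_nonneg (support_nonneg hprob haOf x) (support_nonneg hprob haOf y)
  · rw [support_eq h, dot_add_right]
    exact add_le_add (dot_le_support haOf _ x (haOf _ h).1.le)
      (dot_le_support haOf _ y (haOf _ h).1.le)

lemma support_convexOn (hprob : ∑' z : ℤ × ℤ, μ z = 1) (haOf : IsDirMap μ aOf) :
    ConvexOn ℝ Set.univ (support aOf) := by
  refine ⟨convex_univ, fun x _ y _ a b ha hb hab => ?_⟩
  rcases eq_or_ne (a • x + b • y) 0 with h | h
  · rw [h, support_zero]
    exact add_nonneg (mul_nonneg ha (support_nonneg hprob haOf x))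
      (mul_nonneg hb (support_nonneg hprob haOf y))
  · rw [support_eq h, dot_add_right, dot_smul_right, dot_smul_right]
    exact add_le_add
      (mul_le_mul_of_nonneg_left (dot_le_support haOf _ x (haOf _ h).1.le) ha)
      (mul_le_mul_of_nonneg_left (dot_le_support haOf _ y (haOf _ h).1.le) hb)

lemma support_continuous (hprob : ∑' z : ℤ × ℤ, μ z = 1) (haOf : IsDirMap μ aOf) :
    Continuous (support aOf) := by
  have h := (support_convexOn hprob haOf).continuousOn isOpen_univ
  rw [← continuousOn_univ]
  exact h

end Support
section MinArgs

variable {μ : ℤ × ℤ → ℝ≥0∞} {aOf : ℝ × ℝ → ℝ × ℝ}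

/-- Positivity of the symmetrized support function, uniformly on the unit circle. -/
lemma circle_min (hprob : ∑' z : ℤ × ℤ, μ z = 1) (h1 : H1 μ) (h3 : H3 μ)
    (haOf : IsDirMap μ aOf) :
    ∃ c₀ : ℝ, 0 < c₀ ∧ ∀ u : ℝ × ℝ, norE u = 1 →
      c₀ ≤ support aOf u + support aOf (-u) := by
  set S : Set (ℝ × ℝ) := {u | norE u = 1} with hS
  have hclosed : IsClosed S := isClosed_eq continuous_norE continuous_const
  have hsub : S ⊆ Metric.closedBall 0 1 := by
    intro u hu
    rw [Metric.mem_closedBall, dist_zero_right]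
    calc ‖u‖ ≤ norE u := norm_le_norE u
      _ = 1 := hu
  have hcpt : IsCompact S :=
    (isCompact_closedBall (0 : ℝ × ℝ) 1).of_isClosed_subset hclosed hsub
  have hne : S.Nonempty := by
    refine ⟨((1 : ℝ), (0 : ℝ)), ?_⟩
    show norE ((1 : ℝ), (0 : ℝ)) = 1
    rw [norE]
    norm_num
  have hcont : Continuous fun u : ℝ × ℝ => support aOf u + support aOf (-u) :=
    (support_continuous hprob haOf).add
      ((support_continuous hprob haOf).comp continuous_neg)
  obtain ⟨u₀, hu₀S, hu₀min⟩ := hcpt.exists_isMinOn hne hcont.continuousOn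
  refine ⟨support aOf u₀ + support aOf (-u₀), ?_, fun u hu => hu₀min hu⟩
  -- positivity at the minimizer
  have hu₀ : u₀ ≠ 0 := by
    intro h
    rw [hS] at hu₀S
    simp only [Set.mem_setOf_eq, h, norE_zero] at hu₀S
    norm_num at hu₀S
  by_contra hle
  push_neg at hle
  have h1' : support aOf u₀ = 0 ∧ support aOf (-u₀) = 0 := by
    constructor <;>
      linarith [support_nonneg hprob haOf u₀, support_nonneg hprob haOf (-u₀)]
  obtain ⟨b, hb⟩ := slater hprob h1 h3
  have hble : jumpGF μ b ≤ 1 := (jump_le_one_iff hprob h3 _).2 hb.le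
  have hbne : ∀ u : ℝ × ℝ, u ≠ 0 → b ≠ aOf u := by
    intro u hu hcon
    have := (haOf u hu).1
    rw [← hcon] at this
    rw [(jump_eq_one_iff hprob h3 _).1 this] at hb
    exact lt_irrefl 1 hb
  have hneg : (-u₀ : ℝ × ℝ) ≠ 0 := neg_ne_zero.2 hu₀
  have d1 := (haOf u₀ hu₀).2 b hble (hbne u₀ hu₀)
  have d2 := (haOf (-u₀) hneg).2 b hble (hbne _ hneg)
  rw [← support_eq hu₀, h1'.1] at d1
  rw [← support_eq hneg, h1'.2, dot_neg_right] at d2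
  linarith

lemma support_sym_growth (hprob : ∑' z : ℤ × ℤ, μ z = 1) (haOf : IsDirMap μ aOf)
    {c₀ : ℝ} (hc₀ : ∀ u : ℝ × ℝ, norE u = 1 → c₀ ≤ support aOf u + support aOf (-u))
    {w : ℝ × ℝ} (hw : w ≠ 0) :
    c₀ * norE w ≤ support aOf w + support aOf (-w) := by
  set t := norE w with htdef
  have ht : 0 < t := norE_pos hw
  set u := t⁻¹ • w with hu
  have hnu : norE u = 1 := by
    rw [hu, norE_smul, abs_of_pos (inv_pos.2 ht), ← htdef, inv_mul_cancel₀ ht.ne']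
  have hwu : w = t • u := by
    rw [hu, smul_smul, mul_inv_cancel₀ ht.ne', one_smul]
  have h1 : support aOf w = t * support aOf u := by
    rw [hwu, support_smul haOf ht.le]
  have h2 : support aOf (-w) = t * support aOf (-u) := by
    have : -w = t • (-u) := by rw [hwu, smul_neg]
    rw [this, support_smul haOf ht.le]
  rw [h1, h2, mul_comm c₀ t, ← mul_add]
  exact mul_le_mul_of_nonneg_left (hc₀ u hnu) ht.le

/-- The pointwise strict inequality off the ray. -/
lemma pointwise_gt (hprob : ∑' z : ℤ × ℤ, μ z = 1) (h1 : H1 μ) (h3 : H3 μ)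
    (haOf : IsDirMap μ aOf) {q : ℝ × ℝ} (hq1 : norE q = 1) {δ : ℝ} (hδ : 0 < δ)
    {w : ℝ × ℝ} (hw : ∀ θ : ℝ, 0 < θ → δ ≤ norE (w - θ • q)) :
    dot (aOf q) q < support aOf w + support aOf (q - w) := by
  have hq0 : q ≠ 0 := by
    intro h
    rw [h, norE_zero] at hq1
    norm_num at hq1
  have hw0 : w ≠ 0 := by
    intro h
    have h2 := hw (δ / 2) (half_pos hδ)
    rw [h, zero_sub, norE_neg, norE_smul, hq1, mul_one, abs_of_pos (half_pos hδ)] at h2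
    linarith
  by_contra hle
  push_neg at hle
  have h1w : dot (aOf q) w ≤ support aOf w :=
    dot_le_support haOf _ w (haOf q hq0).1.le
  have h2w : dot (aOf q) (q - w) ≤ support aOf (q - w) :=
    dot_le_support haOf _ (q - w) (haOf q hq0).1.le
  have hsum : dot (aOf q) w + dot (aOf q) (q - w) = dot (aOf q) q := by
    rw [← dot_add_right]
    congr 1
    abel
  have heqw : dot (aOf q) w = support aOf w := by linarith
  have haw : aOf w = aOf q := by
    by_contra hne
    have := (haOf w hw0).2 (aOf q) (haOf q hq0).1.le (Ne.symm hne)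
    rw [heqw, support_eq hw0] at this
    exact lt_irrefl _ this
  obtain ⟨θ, hθ, hwθ⟩ := eq_ray hprob h1 h3 haOf hq0 hw0 haw
  have := hw θ hθ
  rw [hwθ, sub_self, norE_zero] at this
  linarith

end MinArgs

/-- **Lemma 6.1.**  Under (H1) and (H3), for any `q ∈ 𝒮²₊` and `δ > 0`, there is a
small `ε > 0` such that `inf { λ_ε(q,w) : inf_{θ>0} |w − θq| ≥ δ } > a(q)·q`, where
`λ_ε(q,w) = a(w)·w + a(q−w)·(q−w) − ε|w|`. -/
theorem lamEps_inf_above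
    (μ : ℤ × ℤ → ℝ≥0∞) (hprob : ∑' z : ℤ × ℤ, μ z = 1)
    (h1 : H1 μ) (h3 : H3 μ)
    (aOf : ℝ × ℝ → ℝ × ℝ) (haOf : IsDirMap μ aOf) :
    ∀ q ∈ Spos, ∀ δ : ℝ, 0 < δ →
      ∃ ε : ℝ, 0 < ε ∧ ∃ c : ℝ, dot (aOf q) q < c ∧
        ∀ w : ℝ × ℝ, (∀ θ : ℝ, 0 < θ → δ ≤ norE (w - θ • q)) →
          c ≤ lamEps aOf ε q w := by
  intro q hq δ hδ
  obtain ⟨-, -, hqE⟩ := hq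
  have hq0 : q ≠ 0 := by
    intro h
    rw [h, norE_zero] at hqE
    norm_num at hqE
  obtain ⟨c₀, hc₀pos, hc₀⟩ := circle_min hprob h1 h3 haOf
  set sq := dot (aOf q) q with hsqdef
  set R : ℝ := max 1 ((2 * (support aOf (-q) + sq + 1)) / c₀) with hRdef
  have hR1 : (1 : ℝ) ≤ R := le_max_left _ _
  have hR0 : (0 : ℝ) < R := lt_of_lt_of_le one_pos hR1
  have hsnq : 0 ≤ support aOf (-q) := support_nonneg hprob haOf (-q)
  have hsq0 : 0 ≤ sq := by
    have := support_nonneg hprob haOf q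
    rwa [support_eq hq0] at this
  have hRbig : support aOf (-q) + sq + 1 ≤ c₀ / 2 * R := by
    have h := le_max_right 1 ((2 * (support aOf (-q) + sq + 1)) / c₀)
    have h2 : c₀ / 2 * ((2 * (support aOf (-q) + sq + 1)) / c₀)
        = support aOf (-q) + sq + 1 := by
      field_simp
    calc support aOf (-q) + sq + 1
        = c₀ / 2 * ((2 * (support aOf (-q) + sq + 1)) / c₀) := h2.symm
      _ ≤ c₀ / 2 * R := mul_le_mul_of_nonneg_left h (by linarith)
  set K : Set (ℝ × ℝ) :=
    {w | (∀ θ : ℝ, 0 < θ → δ ≤ norE (w - θ • q)) ∧ norE w ≤ R} with hKdef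
  obtain ⟨m, hm_gt, hmK⟩ : ∃ m : ℝ, sq < m ∧
      ∀ w ∈ K, m ≤ support aOf w + support aOf (q - w) := by
    rcases K.eq_empty_or_nonempty with hKe | hKne
    · exact ⟨sq + 1, lt_add_one sq, fun w hw => absurd (hKe ▸ hw) (Set.notMem_empty w)⟩
    · have hcl1 : IsClosed {w : ℝ × ℝ | ∀ θ : ℝ, 0 < θ → δ ≤ norE (w - θ • q)} := by
        have heq : {w : ℝ × ℝ | ∀ θ : ℝ, 0 < θ → δ ≤ norE (w - θ • q)}
            = ⋂ (θ : ℝ), ⋂ (_ : 0 < θ), {w : ℝ × ℝ | δ ≤ norE (w - θ • q)} := by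
          ext w
          simp [Set.mem_iInter]
        rw [heq]
        exact isClosed_iInter fun θ => isClosed_iInter fun _ =>
          isClosed_le continuous_const
            (continuous_norE.comp (continuous_id.sub continuous_const))
      have hcl2 : IsClosed {w : ℝ × ℝ | norE w ≤ R} :=
        isClosed_le continuous_norE continuous_const
      have hclK : IsClosed K := by
        have : K = {w : ℝ × ℝ | ∀ θ : ℝ, 0 < θ → δ ≤ norE (w - θ • q)}
            ∩ {w : ℝ × ℝ | norE w ≤ R} := by
          ext w
          simp [hKdef, Set.mem_inter_iff]
        rw [this]
        exact hcl1.inter hcl2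
      have hsubK : K ⊆ Metric.closedBall 0 R := by
        intro w hw
        rw [Metric.mem_closedBall, dist_zero_right]
        exact le_trans (norm_le_norE w) hw.2
      have hcptK : IsCompact K :=
        (isCompact_closedBall (0 : ℝ × ℝ) R).of_isClosed_subset hclK hsubK
      have hcontF : Continuous fun w : ℝ × ℝ => support aOf w + support aOf (q - w) :=
        (support_continuous hprob haOf).add
          ((support_continuous hprob haOf).comp (continuous_const.sub continuous_id))
      obtain ⟨w₀, hw₀K, hw₀min⟩ := hcptK.exists_isMinOn hKne hcontF.continuousOn
      exact ⟨support aOf w₀ + support aOf (q - w₀),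
        pointwise_gt hprob h1 h3 haOf hqE hδ hw₀K.1, fun w hw => hw₀min hw⟩
  set ε := min (c₀ / 2) ((m - sq) / (2 * R)) with hεdef
  have hε0 : 0 < ε := lt_min (by linarith) (div_pos (by linarith) (by linarith))
  refine ⟨ε, hε0, min ((m + sq) / 2) (sq + 1), lt_min (by linarith) (lt_add_one sq), ?_⟩
  intro w hwcond
  show min ((m + sq) / 2) (sq + 1) ≤ support aOf w + support aOf (q - w) - ε * norE w
  rcases le_or_gt (norE w) R with hle | hgt
  · have hF := hmK w ⟨hwcond, hle⟩
    have hεn : ε * norE w ≤ (m - sq) / 2 := by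
      calc ε * norE w ≤ ((m - sq) / (2 * R)) * R := by
            apply mul_le_mul (min_le_right _ _) hle (norE_nonneg w)
            exact le_of_lt (div_pos (by linarith) (by linarith))
        _ = (m - sq) / 2 := by
            field_simp
    calc min ((m + sq) / 2) (sq + 1) ≤ (m + sq) / 2 := min_le_left _ _
      _ ≤ support aOf w + support aOf (q - w) - ε * norE w := by linarith
  · have hw0 : w ≠ 0 := by
      intro h
      rw [h, norE_zero] at hgt
      linarith
    have hFg : c₀ * norE w - support aOf (-q)
        ≤ support aOf w + support aOf (q - w) := by
      have hgrow := support_sym_growth hprob haOf hc₀ hw0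
      have hsub := support_add_le hprob haOf (q - w) (-q)
      have h3 : (q - w) + (-q) = -w := by abel
      rw [h3] at hsub
      linarith
    have hεw : ε * norE w ≤ c₀ / 2 * norE w :=
      mul_le_mul_of_nonneg_right (min_le_left _ _) (norE_nonneg w)
    have hcw : c₀ / 2 * R ≤ c₀ / 2 * norE w :=
      mul_le_mul_of_nonneg_left hgt.le (by linarith)
    calc min ((m + sq) / 2) (sq + 1) ≤ sq + 1 := min_le_right _ _
      _ ≤ support aOf w + support aOf (q - w) - ε * norE w := by
          have hcwgrow : c₀ * norE w = c₀ / 2 * norE w + c₀ / 2 * norE w := by ring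
          linarith

end KRWQ
end

section
/- Under hypothesis (H1), the greatest common divisor of the set of all integers k > 0 for which inf_{z ∈ ℤ×ℕ*} P_z(Z₊¹(k) = z) > 0 is equal to the period k̂ of the random walk (S(t)), i.e. to the greatest common divisor of {k > 0 : P₀(S(k) = 0) > 0}. -/
open scoped ENNReal Classical
open Filter

namespace KRWQ

section Aux

variable {G : Type*} [AddCommGroup G] (μ : G → ℝ≥0∞)

private lemma nstep_ge_path (l : List G) (z : G) :
    (l.map μ).prod ≤ nstep μ l.length z (z + l.sum) := by
  induction l using List.reverseRecOn with
  | nil => simp [nstep]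
  | append_singleton l a ih =>
    have hlen : (l ++ [a]).length = l.length + 1 := by simp
    rw [hlen]
    show (List.map μ (l ++ [a])).prod ≤ ∑' w : G, nstep μ l.length z w * μ (z + (l ++ [a]).sum - w)
    refine le_trans ?_ (ENNReal.le_tsum (z + l.sum))
    have h1 : z + (l ++ [a]).sum - (z + l.sum) = a := by simp
    rw [h1]
    have h2 : (List.map μ (l ++ [a])).prod = (List.map μ l).prod * μ a := by simp
    rw [h2]
    exact mul_le_mul' ih le_rfl

private lemma nstep_pos_path : ∀ {n : ℕ} {z z' : G}, 0 < nstep μ n z z' →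
    ∃ l : List G, l.length = n ∧ (∀ a ∈ l, 0 < μ a) ∧ z + l.sum = z' := by
  intro n
  induction n with
  | zero =>
    intro z z' h
    have : z' = z := by
      by_contra hne
      simp [nstep, hne] at h
    exact ⟨[], rfl, by simp, by simp [this]⟩
  | succ n ih =>
    intro z z' h
    have h' : ∑' w : G, nstep μ n z w * μ (z' - w) ≠ 0 := by
      rw [show nstep μ (n+1) z z' = ∑' w : G, nstep μ n z w * μ (z' - w) from rfl] at h
      exact h.ne'
    rw [ne_eq, ENNReal.tsum_eq_zero] at h'
    push_neg at h'
    obtain ⟨w, hw⟩ := h'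
    have h1 : nstep μ n z w ≠ 0 := fun h0 => hw (by simp [h0])
    have h2 : μ (z' - w) ≠ 0 := fun h0 => hw (by simp [h0])
    obtain ⟨l, hl1, hl2, hl3⟩ := ih (pos_iff_ne_zero.mpr h1)
    refine ⟨l ++ [z' - w], by simp [hl1], ?_, ?_⟩
    · intro a ha
      rcases List.mem_append.mp ha with h | h
      · exact hl2 a h
      · simp at h; subst h; exact pos_iff_ne_zero.mpr h2
    · simp [← add_assoc, hl3]

private lemma nstepK_le_nstep (A : Set G) :
    ∀ (n : ℕ) (z z' : G), nstepK μ A n z z' ≤ nstep μ n z z' := by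
  intro n
  induction n with
  | zero => intro z z'; simp [nstep, nstepK]
  | succ n ih =>
    intro z z'
    refine le_trans (Set.indicator_le_self _ _ _) ?_
    exact ENNReal.tsum_le_tsum fun w => mul_le_mul' (ih z w) le_rfl

private lemma nstepK_ge_path (A : Set G) (l : List G) (z : G)
    (hpre : ∀ j, 0 < j → j ≤ l.length → z + (l.take j).sum ∈ A) :
    (l.map μ).prod ≤ nstepK μ A l.length z (z + l.sum) := by
  induction l using List.reverseRecOn with
  | nil => simp [nstepK]
  | append_singleton l a ih =>
    have hlen : (l ++ [a]).length = l.length + 1 := by simp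
    rw [hlen]
    have hend : z + (l ++ [a]).sum ∈ A := by
      have := hpre (l.length + 1) (Nat.succ_pos _) (by simp)
      rwa [List.take_of_length_le (by simp)] at this
    show (List.map μ (l ++ [a])).prod ≤
      A.indicator (fun u => ∑' w : G, nstepK μ A l.length z w * μ (u - w)) (z + (l ++ [a]).sum)
    rw [Set.indicator_of_mem hend]
    refine le_trans ?_ (ENNReal.le_tsum (z + l.sum))
    have h1 : z + (l ++ [a]).sum - (z + l.sum) = a := by simp
    rw [h1]
    have h2 : (List.map μ (l ++ [a])).prod = (List.map μ l).prod * μ a := by simp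
    rw [h2]
    refine mul_le_mul' (ih fun j hj hjl => ?_) le_rfl
    have := hpre j hj (le_trans hjl (by simp))
    rwa [List.take_append_of_le_length hjl] at this

omit [AddCommGroup G] in
private lemma listProd_pos (l : List G) (h : ∀ a ∈ l, 0 < μ a) : 0 < (l.map μ).prod := by
  induction l with
  | nil => simp
  | cons a t ih =>
    simp only [List.map_cons, List.prod_cons]
    rw [pos_iff_ne_zero]
    exact mul_ne_zero (h a (by simp)).ne' (ih fun b hb => h b (by simp [hb])).ne'

private lemma cycle_lemma (l : List ℤ) (h : l.sum = 0) :
    ∃ n, ∀ j, 0 ≤ ((l.rotate n).take j).sum := by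
  set k := l.length with hk
  set p : ℕ → ℤ := fun j => (l.take j).sum with hp
  obtain ⟨i, hi_mem, hmin'⟩ := Finset.exists_min_image (Finset.range (k+1)) p ⟨0, by simp⟩
  have hik : i ≤ k := Nat.lt_succ_iff.mp (Finset.mem_range.mp hi_mem)
  have hptop : ∀ m, k ≤ m → p m = 0 := by
    intro m hm
    simp only [hp]
    rw [List.take_of_length_le hm, h]
  have hmin : ∀ m, p i ≤ p m := by
    intro m
    rcases le_or_gt m k with hmk | hkm
    · exact hmin' m (Finset.mem_range.mpr (Nat.lt_succ_of_le hmk))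
    · rw [hptop m hkm.le, ← hptop k le_rfl]
      exact hmin' k (by simp)
  refine ⟨i, fun j => ?_⟩
  rw [List.rotate_eq_drop_append_take hik, List.take_append, List.sum_append]
  have hdlen : (List.drop i l).length = k - i := by simp [hk]
  rw [hdlen, List.take_take]
  have hdrop : (List.take j (List.drop i l)).sum = p (i + j) - p i := by
    have hs : p (i + j) = p i + (List.take j (List.drop i l)).sum := by
      simp only [hp]; rw [List.take_add, List.sum_append]
    omega
  have hmintake : ((List.take ((j - (k - i)) ⊓ i) l)).sum = p ((j - (k - i)) ⊓ i) := rfl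
  rw [hdrop, hmintake]
  rcases le_or_gt j (k - i) with hcase | hcase
  · have hmin0 : (j - (k - i)) ⊓ i = 0 := by omega
    rw [hmin0]
    have hp0 : p 0 = 0 := by simp [hp]
    have h1 := hmin (i + j)
    have h2 := hmin 0
    omega
  · have h1 : p (i + j) = 0 := hptop _ (by omega)
    have h2 := hmin ((j - (k - i)) ⊓ i)
    omega

/-- Key equivalence: positivity of the uniform return probability of the killed walk
on the half plane is equivalent to positivity of the return probability at the origin. -/
private lemma key_equiv (μ : ℤ × ℤ → ℝ≥0∞) (k : ℕ) :
    (0 < ⨅ z : {z : ℤ × ℤ // 0 < z.2}, nstepK μ upperHalf k z.1 z.1) ↔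
      0 < nstep μ k (0 : ℤ × ℤ) 0 := by
  constructor
  · intro h
    have h1 : (0 : ℝ≥0∞) < nstepK μ upperHalf k ((0 : ℤ), (1 : ℤ)) ((0 : ℤ), (1 : ℤ)) :=
      lt_of_lt_of_le h (iInf_le _ (⟨((0 : ℤ), (1 : ℤ)), by norm_num⟩ : {z : ℤ × ℤ // 0 < z.2}))
    have h2 : (0 : ℝ≥0∞) < nstep μ k ((0 : ℤ), (1 : ℤ)) ((0 : ℤ), (1 : ℤ)) :=
      lt_of_lt_of_le h1 (nstepK_le_nstep μ upperHalf k _ _)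
    obtain ⟨l, hl1, hl2, hl3⟩ := nstep_pos_path μ h2
    have hsum : l.sum = 0 := by
      have : ((0 : ℤ), (1 : ℤ)) + l.sum = ((0 : ℤ), (1 : ℤ)) + 0 := by rw [add_zero]; exact hl3
      exact add_left_cancel this
    have := nstep_ge_path μ l (0 : ℤ × ℤ)
    rw [hl1, hsum, add_zero] at this
    exact lt_of_lt_of_le (listProd_pos μ l hl2) this
  · intro h
    obtain ⟨l, hl1, hl2, hl3⟩ := nstep_pos_path μ h
    have hsum : l.sum = 0 := by rwa [zero_add] at hl3
    have hsnd : (l.map Prod.snd).sum = 0 := by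
      have := map_list_sum (AddMonoidHom.snd ℤ ℤ) l
      simpa [hsum] using this.symm
    obtain ⟨n, hn⟩ := cycle_lemma (l.map Prod.snd) hsnd
    set r := l.rotate n with hr
    have hrperm : r.Perm l := List.rotate_perm l n
    have hrlen : r.length = k := by rw [hrperm.length_eq, hl1]
    have hrsum : r.sum = 0 := by rw [hrperm.sum_eq, hsum]
    have hrmem : ∀ a ∈ r, 0 < μ a := fun a ha => hl2 a (hrperm.mem_iff.mp ha)
    have hpref : ∀ j, 0 ≤ ((r.take j).sum).2 := by
      intro j
      have h1 : ((r.take j).map Prod.snd).sum = ((r.take j).sum).2 := by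
        simpa using (map_list_sum (AddMonoidHom.snd ℤ ℤ) (r.take j)).symm
      rw [← h1]
      have h2 : (r.take j).map Prod.snd = ((l.map Prod.snd).rotate n).take j := by
        rw [← List.map_rotate, List.map_take]
      rw [h2]
      exact hn j
    have hbound : ∀ z : {z : ℤ × ℤ // 0 < z.2},
        (r.map μ).prod ≤ nstepK μ upperHalf k z.1 z.1 := by
      intro z
      have := nstepK_ge_path μ upperHalf r z.1 (fun j hj hjl => ?_)
      · rw [hrlen, hrsum, add_zero] at this; exact this
      · show (0 : ℤ) < (z.1 + (r.take j).sum).2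
        have := hpref j
        have hz := z.2
        simp only [Prod.snd_add]
        omega
    exact lt_of_lt_of_le (listProd_pos μ r hrmem) (le_iInf hbound)
end Aux

/-- **Lemma 7.1.**  Under (H1), the greatest common divisor of the set of all integers
`k > 0` for which `inf_{z ∈ ℤ×ℕ*} P_z(Z₊¹(k) = z) > 0` is equal to the period `k̂` of
the random walk `S`, i.e. to the gcd of `{k > 0 : P₀(S(k) = 0) > 0}`. -/
theorem killed_halfplane_period
    (μ : ℤ × ℤ → ℝ≥0∞) (hprob : ∑' z : ℤ × ℤ, μ z = 1)
    (h1 : H1 μ) :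
    ∀ d : ℕ,
      IsGcdOfSet
        {k : ℕ | 0 < k ∧
          0 < ⨅ z : {z : ℤ × ℤ // 0 < z.2}, nstepK μ upperHalf k z.1 z.1} d ↔
      IsGcdOfSet {k : ℕ | 0 < k ∧ 0 < nstep μ k (0 : ℤ × ℤ) 0} d := by
  have hset : {k : ℕ | 0 < k ∧
      0 < ⨅ z : {z : ℤ × ℤ // 0 < z.2}, nstepK μ upperHalf k z.1 z.1} =
      {k : ℕ | 0 < k ∧ 0 < nstep μ k (0 : ℤ × ℤ) 0} :=
    Set.ext fun k => and_congr_right fun _ => key_equiv μ k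
  intro d
  rw [hset]

end KRWQ
end
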